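/- arXiv:math/9811149 — 6 statements merged into one kernel-verified Lean document; each statement's English description precedes it below -/
import Mathlib

section
/- Let (f_i)_{i=1}^∞ be a frame for a Hilbert space H. Then (f_i) is a Riesz frame if and only if there exists A > 0 such that for every finite set Δ ⊆ ℕ for which the family (f_i)_{i∈Δ} is linearly independent, one has √A·(Σ_{i∈Δ}|a_i|²)^{1/2} ≤ ‖Σ_{i∈Δ} a_i f_i‖ for all scalars (a_i)_{i∈Δ} (equivalently, (f_i)_{i∈Δ} has lower frame bound A on its span). -/
open scoped ComplexInnerProductSpace
open Submodule Filter

noncomputable section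

variable {H : Type*} [NormedAddCommGroup H] [InnerProductSpace ℂ H] [CompleteSpace H]

/-- The closed linear span of a set of vectors. -/
def closedSpan (s : Set H) : Submodule ℂ H := (Submodule.span ℂ s).topologicalClosure

/-- `f` is a frame for the closed subspace `K` with frame bounds `A`, `B`. -/
def IsFrameFor {ι : Type*} (f : ι → H) (K : Submodule ℂ H) (A B : ℝ) : Prop :=
  (∀ i, f i ∈ K) ∧ ∀ g ∈ K,
    Summable (fun i => ‖⟪g, f i⟫‖ ^ 2) ∧
    A * ‖g‖ ^ 2 ≤ ∑' i, ‖⟪g, f i⟫‖ ^ 2 ∧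
    ∑' i, ‖⟪g, f i⟫‖ ^ 2 ≤ B * ‖g‖ ^ 2

/-- `f` is a frame for the closed linear span of its terms, with bounds `A`, `B`. -/
def IsFrameSequence {ι : Type*} (f : ι → H) (A B : ℝ) : Prop :=
  IsFrameFor f (closedSpan (Set.range f)) A B

/-- Riesz frame with given uniform (Riesz frame) bounds. -/
def IsRieszFrameWith {ι : Type*} (f : ι → H) (A B : ℝ) : Prop :=
  closedSpan (Set.range f) = ⊤ ∧
  ∀ Δ : Set ι, IsFrameSequence (fun i : Δ => f i) A B

def IsRieszFrame {ι : Type*} (f : ι → H) : Prop :=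
  ∃ A B : ℝ, 0 < A ∧ 0 < B ∧ IsRieszFrameWith f A B

def HasSubframeProperty {ι : Type*} (f : ι → H) : Prop :=
  ∀ Δ : Set ι, ∃ A B : ℝ, 0 < A ∧ 0 < B ∧ IsFrameSequence (fun i : Δ => f i) A B

/-- Riesz basis for the whole space. -/
def IsRieszBasis {ι : Type*} (g : ι → H) : Prop :=
  closedSpan (Set.range g) = ⊤ ∧ ∃ c C : ℝ, 0 < c ∧ 0 < C ∧
    ∀ a : ι →₀ ℂ,
      c * Real.sqrt (∑ i ∈ a.support, ‖a i‖ ^ 2) ≤ ‖∑ i ∈ a.support, a i • g i‖ ∧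
      ‖∑ i ∈ a.support, a i • g i‖ ≤ C * Real.sqrt (∑ i ∈ a.support, ‖a i‖ ^ 2)

/-- The orthogonal projection of `H` onto the closed linear span of `s`, as a map `H → H`. -/
def projSpan (s : Set H) : H →L[ℂ] H :=
  haveI : CompleteSpace (closedSpan s : Submodule ℂ H) :=
    (Submodule.isClosed_topologicalClosure _).completeSpace_coe
  (closedSpan s).subtypeL.comp (orthogonalProjection (closedSpan s))


set_option linter.unusedSectionVars false

private lemma aux_cs {ι : Type*} (F : Finset ι) (u v : ι → ℝ) (hu : ∀ i, 0 ≤ u i)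
    (hv : ∀ i, 0 ≤ v i) :
    ∑ i ∈ F, u i * v i ≤ Real.sqrt (∑ i ∈ F, u i ^ 2) * Real.sqrt (∑ i ∈ F, v i ^ 2) := by
  have h := Finset.sum_mul_sq_le_sq_mul_sq F u v
  have h1 : 0 ≤ ∑ i ∈ F, u i * v i := Finset.sum_nonneg fun i _ => mul_nonneg (hu i) (hv i)
  have h2 := Real.sqrt_le_sqrt h
  rwa [Real.sqrt_sq h1, Real.sqrt_mul (Finset.sum_nonneg fun i _ => sq_nonneg _)] at h2

private lemma aux_mink {ι : Type*} (F : Finset ι) (u v : ι → ℂ) :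
    Real.sqrt (∑ i ∈ F, ‖u i + v i‖ ^ 2) ≤
      Real.sqrt (∑ i ∈ F, ‖u i‖ ^ 2) + Real.sqrt (∑ i ∈ F, ‖v i‖ ^ 2) := by
  let x : EuclideanSpace ℂ F := WithLp.toLp 2 (fun i => u i)
  let y : EuclideanSpace ℂ F := WithLp.toLp 2 (fun i => v i)
  have key : ∀ z : EuclideanSpace ℂ F, ∀ w : ι → ℂ, (∀ i : F, z i = w i) →
      ‖z‖ = Real.sqrt (∑ i ∈ F, ‖w i‖ ^ 2) := by
    intro z w hz
    rw [EuclideanSpace.norm_eq]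
    congr 1
    rw [← Finset.sum_coe_sort F (fun i => ‖w i‖ ^ 2)]
    exact Finset.sum_congr rfl fun i _ => by rw [hz i]
  have h := norm_add_le x y
  rw [key x u (fun i => rfl), key y v (fun i => rfl),
    key (x + y) (fun i => u i + v i) (fun i => rfl)] at h
  exact h

private lemma lower_on_span (f : ℕ → H) {A : ℝ} (hA : 0 < A) (s : Finset ℕ)
    (hb : ∀ a : ℕ → ℂ, Real.sqrt A * Real.sqrt (∑ i ∈ s, ‖a i‖ ^ 2) ≤ ‖∑ i ∈ s, a i • f i‖)
    (g : H) (hg : g ∈ span ℂ (Set.range fun i : s => f i)) :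
    A * ‖g‖ ^ 2 ≤ ∑ i ∈ s, ‖⟪g, f i⟫‖ ^ 2 := by
  classical
  obtain ⟨c, hc⟩ := (mem_span_range_iff_exists_fun ℂ).mp hg
  set a : ℕ → ℂ := fun n => if h : n ∈ s then c ⟨n, h⟩ else 0 with ha
  have hsum : ∑ i ∈ s, a i • f i = g := by
    rw [← Finset.sum_coe_sort s (fun i => a i • f i), ← hc]
    refine Finset.sum_congr rfl fun i _ => ?_
    simp only [a, dif_pos i.2]
  have hT : 0 ≤ ∑ i ∈ s, ‖⟪g, f i⟫‖ ^ 2 := Finset.sum_nonneg fun i _ => sq_nonneg _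
  rcases eq_or_ne ‖g‖ 0 with h0 | h0
  · rw [h0]
    simpa using hT
  have hgpos : 0 < ‖g‖ := lt_of_le_of_ne (norm_nonneg g) (Ne.symm h0)
  have h2 : ⟪g, g⟫ = ∑ i ∈ s, a i * ⟪g, f i⟫ := by
    rw [← hsum, inner_sum]
    exact Finset.sum_congr rfl fun i _ => inner_smul_right _ _ _
  have h3 : ‖g‖ ^ 2 ≤ ∑ i ∈ s, ‖a i‖ * ‖⟪g, f i⟫‖ := by
    have h1 : (‖g‖ : ℝ) ^ 2 = ‖⟪g, g⟫‖ := by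
      rw [inner_self_eq_norm_sq_to_K]
      simp
    rw [h1, h2]
    refine le_trans (norm_sum_le _ _) ?_
    exact Finset.sum_le_sum fun i _ => le_of_eq (norm_mul _ _)
  have h4 := aux_cs s (fun i => ‖a i‖) (fun i => ‖⟪g, f i⟫‖)
    (fun i => norm_nonneg _) (fun i => norm_nonneg _)
  have h5 := hb a
  rw [hsum] at h5
  set sA := Real.sqrt A with hsA
  set sSa := Real.sqrt (∑ i ∈ s, ‖a i‖ ^ 2) with hsSa
  set sT := Real.sqrt (∑ i ∈ s, ‖⟪g, f i⟫‖ ^ 2) with hsT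
  have hsApos : 0 < sA := Real.sqrt_pos.mpr hA
  have hsTnn : 0 ≤ sT := Real.sqrt_nonneg _
  have hsSann : 0 ≤ sSa := Real.sqrt_nonneg _
  have h6 : ‖g‖ ^ 2 ≤ sSa * sT := le_trans h3 h4
  -- sA * ‖g‖ ≤ sT
  have h7 : sA * ‖g‖ ^ 2 ≤ ‖g‖ * sT := by
    calc sA * ‖g‖ ^ 2 ≤ sA * (sSa * sT) := by nlinarith
      _ = (sA * sSa) * sT := by ring
      _ ≤ ‖g‖ * sT := mul_le_mul_of_nonneg_right h5 hsTnn
  have h8 : sA * ‖g‖ ≤ sT := by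
    have := h7
    rw [pow_two] at this
    have h9 : sA * ‖g‖ * ‖g‖ ≤ sT * ‖g‖ := by nlinarith
    exact le_of_mul_le_mul_right h9 hgpos
  have h10 : (sA * ‖g‖) ^ 2 ≤ sT ^ 2 := by
    refine pow_le_pow_left₀ (by positivity) h8 2
  rw [mul_pow, hsA, Real.sq_sqrt hA.le, hsT, Real.sq_sqrt hT] at h10
  exact h10

private lemma select_indep (f : ℕ → H) (Δ : Set ℕ) (g : H)
    (hg : g ∈ span ℂ (Set.range fun i : Δ => f i)) :
    ∃ F : Finset ℕ, ↑F ⊆ Δ ∧ LinearIndependent ℂ (fun i : F => f i) ∧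
      g ∈ span ℂ (Set.range fun i : F => f i) := by
  classical
  have himg : (Set.range fun i : Δ => f i) = f '' Δ := (Set.image_eq_range f Δ).symm
  rw [himg] at hg
  obtain ⟨t, htsub, hgt⟩ := Submodule.mem_span_finite_of_mem_span hg
  obtain ⟨b, hbt, hbspan, hbli⟩ := exists_linearIndependent ℂ (↑t : Set H)
  have hbfin : b.Finite := t.finite_toSet.subset hbt
  have hbsubimg : b ⊆ f '' Δ := fun x hx => htsub (hbt hx)
  set bf := hbfin.toFinset with hbf
  have hbfmem : ∀ x ∈ bf, ∃ i, i ∈ Δ ∧ f i = x := by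
    intro x hx
    rw [hbf, Set.Finite.mem_toFinset] at hx
    obtain ⟨i, hiΔ, hfi⟩ := hbsubimg hx
    exact ⟨i, hiΔ, hfi⟩
  choose! φ hφ1 hφ2 using hbfmem
  set F : Finset ℕ := bf.image φ with hF
  have himgF : f '' ↑F = b := by
    rw [hF, Finset.coe_image, Set.image_image]
    rw [show (fun x => f (φ x)) '' ↑bf = id '' ↑bf from
      Set.image_congr fun x hx => hφ2 x (Finset.mem_coe.mp hx)]
    rw [Set.image_id, hbf, Set.Finite.coe_toFinset]
  have hFinj : Set.InjOn f ↑F := by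
    intro i hi j hj hij
    rw [hF, Finset.coe_image] at hi hj
    obtain ⟨x, hx, rfl⟩ := hi
    obtain ⟨y, hy, rfl⟩ := hj
    rw [hφ2 x (Finset.mem_coe.mp hx), hφ2 y (Finset.mem_coe.mp hy)] at hij
    rw [hij]
  refine ⟨F, ?_, ?_, ?_⟩
  · intro i hi
    rw [hF, Finset.coe_image] at hi
    obtain ⟨x, hx, rfl⟩ := hi
    exact hφ1 x (Finset.mem_coe.mp hx)
  · let e : { i // i ∈ F } → b := fun i =>
      ⟨f i, by rw [← himgF]; exact Set.mem_image_of_mem f (Finset.mem_coe.mpr i.2)⟩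
    have einj : Function.Injective e := by
      intro i j hij
      have : f i = f j := congrArg Subtype.val hij
      exact Subtype.ext (hFinj (Finset.mem_coe.mpr i.2) (Finset.mem_coe.mpr j.2) this)
    exact hbli.comp e einj
  · have hgb : g ∈ span ℂ b := by rw [hbspan]; exact hgt
    rw [← himgF, Set.image_eq_range] at hgb
    exact hgb


private lemma norm_zero_of_mul_sq_nonpos {A : ℝ} (hA : 0 < A) {x : H}
    (h : A * ‖x‖ ^ 2 ≤ 0) : x = 0 := by
  have h1 : ‖x‖ ^ 2 ≤ 0 := by nlinarith [sq_nonneg ‖x‖]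
  have h2 : ‖x‖ ^ 2 = 0 := le_antisymm h1 (sq_nonneg _)
  have h3 : ‖x‖ = 0 := (pow_eq_zero_iff two_ne_zero).mp h2
  exact norm_eq_zero.mp h3

/-- **Proposition 2.1.** A frame is a Riesz frame iff there is a uniform lower Riesz
basis bound for all finite linearly independent subfamilies. -/
theorem riesz_frame_iff_uniform_lower_riesz_bound
    (f : ℕ → H) (A₀ B₀ : ℝ) (hA₀ : 0 < A₀) (hB₀ : 0 < B₀)
    (hf : IsFrameFor f (⊤ : Submodule ℂ H) A₀ B₀) :
    IsRieszFrame f ↔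
      ∃ A : ℝ, 0 < A ∧ ∀ Δ : Finset ℕ,
        LinearIndependent ℂ (fun i : Δ => f i) →
        ∀ a : ℕ → ℂ,
          Real.sqrt A * Real.sqrt (∑ i ∈ Δ, ‖a i‖ ^ 2) ≤ ‖∑ i ∈ Δ, a i • f i‖ := by
  classical
  constructor
  · -- forward direction
    rintro ⟨A, B, hA, hB, hcl, hsub⟩
    refine ⟨A, hA, fun Δ hli a => ?_⟩
    obtain ⟨hmem, hineq⟩ := hsub (↑Δ : Set ℕ)
    haveI : FiniteDimensional ℂ (span ℂ (Set.range fun i : (↑Δ : Set ℕ) => f i)) :=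
      FiniteDimensional.span_of_finite ℂ (Set.finite_range _)
    have hWle : span ℂ (Set.range fun i : (↑Δ : Set ℕ) => f i) ≤
        closedSpan (Set.range fun i : (↑Δ : Set ℕ) => f i) := le_topologicalClosure _
    have hlow : ∀ g : (span ℂ (Set.range fun i : (↑Δ : Set ℕ) => f i)),
        A * ‖(g : H)‖ ^ 2 ≤ ∑ i ∈ Δ, ‖⟪(g : H), f i⟫‖ ^ 2 := by
      intro g
      obtain ⟨hs, hl, hu⟩ := hineq (g : H) (hWle g.2)
      refine le_trans hl (le_of_eq ?_)
      exact Finset.tsum_subtype Δ (fun i => ‖⟪(g : H), f i⟫‖ ^ 2)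
    set W := span ℂ (Set.range fun i : (↑Δ : Set ℕ) => f i) with hW
    let R : W →ₗ[ℂ] EuclideanSpace ℂ (↑Δ : Set ℕ) :=
      { toFun := fun g => WithLp.toLp 2 (fun i => ⟪f (i : ℕ), (g : H)⟫)
        map_add' := fun x y => by
          ext i
          simp [inner_add_right]
        map_smul' := fun c x => by
          ext i
          simp [inner_smul_right] }
    have hinj : Function.Injective R := by
      intro x y hxy
      have hz : R (x - y) = 0 := by rw [map_sub, hxy, sub_self]
      have h0 : ∀ i : (↑Δ : Set ℕ), ⟪f (i : ℕ), ((x - y : W) : H)⟫ = 0 :=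
        fun i => by
          have := congrArg (fun v : EuclideanSpace ℂ (↑Δ : Set ℕ) => v i) hz
          simpa [R] using this
      have hzero : ∑ i ∈ Δ, ‖⟪((x - y : W) : H), f i⟫‖ ^ 2 = 0 := by
        refine Finset.sum_eq_zero fun i hi => ?_
        have h2 : ⟪((x - y : W) : H), f i⟫ = 0 := by
          rw [← inner_conj_symm, h0 ⟨i, hi⟩, map_zero]
        rw [h2]
        simp
      have hl := hlow (x - y)
      rw [hzero] at hl
      have : ((x - y : W) : H) = 0 := norm_zero_of_mul_sq_nonpos hA hl
      have hxy0 : (x - y : W) = 0 := by exact_mod_cast Subtype.ext this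
      exact sub_eq_zero.mp hxy0
    have hli' : LinearIndependent ℂ (fun i : (↑Δ : Set ℕ) => f i) := hli
    have hrank : Module.finrank ℂ W = Module.finrank ℂ (EuclideanSpace ℂ (↑Δ : Set ℕ)) := by
      rw [hW, finrank_span_eq_card hli', finrank_euclideanSpace]
    obtain ⟨g, hg⟩ :=
      (LinearMap.injective_iff_surjective_of_finrank_eq_finrank hrank).mp hinj
        (WithLp.toLp 2 (fun i => a (i : ℕ)) : EuclideanSpace ℂ (↑Δ : Set ℕ))
    have hgv : ∀ i ∈ Δ, ⟪f i, (g : H)⟫ = a i := fun i hi =>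
      congrArg (fun v : EuclideanSpace ℂ (↑Δ : Set ℕ) => v ⟨i, hi⟩) hg
    have hS0 : (0:ℝ) ≤ ∑ i ∈ Δ, ‖a i‖ ^ 2 := Finset.sum_nonneg fun i _ => sq_nonneg _
    rcases eq_or_lt_of_le hS0 with hS | hS
    · rw [← hS, Real.sqrt_zero, mul_zero]
      exact norm_nonneg _
    have hxg : ⟪∑ i ∈ Δ, a i • f i, (g : H)⟫ = ((∑ i ∈ Δ, ‖a i‖ ^ 2 : ℝ) : ℂ) := by
      rw [sum_inner]
      push_cast
      refine Finset.sum_congr rfl fun i hi => ?_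
      rw [inner_smul_left, hgv i hi, RCLike.conj_mul]
      norm_cast
    have hS1 : (∑ i ∈ Δ, ‖a i‖ ^ 2) ≤ ‖∑ i ∈ Δ, a i • f i‖ * ‖(g : H)‖ := by
      have hni := norm_inner_le_norm (𝕜 := ℂ) (∑ i ∈ Δ, a i • f i) (g : H)
      rw [hxg, Complex.norm_real, Real.norm_of_nonneg hS0] at hni
      exact hni
    have hgle : A * ‖(g : H)‖ ^ 2 ≤ ∑ i ∈ Δ, ‖a i‖ ^ 2 := by
      refine (hlow g).trans (le_of_eq (Finset.sum_congr rfl fun i hi => ?_))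
      rw [← inner_conj_symm, hgv i hi, RCLike.norm_conj]
    -- final algebra
    set S := ∑ i ∈ Δ, ‖a i‖ ^ 2 with hSdef
    set n := ‖∑ i ∈ Δ, a i • f i‖ with hn
    set m := ‖(g : H)‖ with hm
    have hmn : 0 ≤ m := norm_nonneg _
    have hnn : 0 ≤ n := norm_nonneg _
    have h1 : Real.sqrt A * m ≤ Real.sqrt S := by
      have : Real.sqrt A * m = Real.sqrt (A * m ^ 2) := by
        rw [Real.sqrt_mul hA.le, Real.sqrt_sq hmn]
      rw [this]
      exact Real.sqrt_le_sqrt hgle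
    have h2 : Real.sqrt A * S ≤ n * Real.sqrt S := by
      calc Real.sqrt A * S ≤ Real.sqrt A * (n * m) :=
            mul_le_mul_of_nonneg_left hS1 (Real.sqrt_nonneg _)
        _ = n * (Real.sqrt A * m) := by ring
        _ ≤ n * Real.sqrt S := mul_le_mul_of_nonneg_left h1 hnn
    have hsSpos : 0 < Real.sqrt S := Real.sqrt_pos.mpr hS
    have h3 : Real.sqrt A * Real.sqrt S * Real.sqrt S ≤ n * Real.sqrt S := by
      rw [mul_assoc, Real.mul_self_sqrt hS0]
      exact h2
    exact le_of_mul_le_mul_right h3 hsSpos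
  · -- backward direction
    rintro ⟨A, hA, hb⟩
    have hcl : closedSpan (Set.range f) = ⊤ := by
      rw [closedSpan, Submodule.topologicalClosure_eq_top_iff, Submodule.eq_bot_iff]
      intro g hg
      obtain ⟨hsumm, hlow, hup⟩ := hf.2 g trivial
      have hzero : ∀ i : ℕ, ⟪g, f i⟫ = 0 := by
        intro i
        have hfi : f i ∈ span ℂ (Set.range f) := subset_span ⟨i, rfl⟩
        have h0 := (Submodule.mem_orthogonal _ g).mp hg (f i) hfi
        rw [← inner_conj_symm, h0, map_zero]
      have hle : A₀ * ‖g‖ ^ 2 ≤ 0 := by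
        refine hlow.trans (le_of_eq ?_)
        simp [hzero]
      exact norm_zero_of_mul_sq_nonpos hA₀ hle
    refine ⟨A, B₀, hA, hB₀, hcl, fun Δ => ?_⟩
    constructor
    · exact fun i => le_topologicalClosure _ (subset_span ⟨i, rfl⟩)
    · intro g hg
      have hfull := hf.2 g trivial
      have hsummAll : Summable fun n => ‖⟪g, f n⟫‖ ^ 2 := hfull.1
      have hsumm : Summable fun i : Δ => ‖⟪g, f (i : ℕ)⟫‖ ^ 2 := hsummAll.subtype Δ
      have hTnn : 0 ≤ ∑' i : Δ, ‖⟪g, f (i : ℕ)⟫‖ ^ 2 := tsum_nonneg fun i => sq_nonneg _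
      refine ⟨hsumm, ?_, ?_⟩
      · -- lower bound
        have key : Real.sqrt A * ‖g‖ ≤ Real.sqrt (∑' i : Δ, ‖⟪g, f (i : ℕ)⟫‖ ^ 2) := by
          refine le_of_forall_pos_le_add fun ε hε => ?_
          set δ := ε / (Real.sqrt A + Real.sqrt B₀ + 1) with hδ
          have hden : 0 < Real.sqrt A + Real.sqrt B₀ + 1 := by positivity
          have hδpos : 0 < δ := div_pos hε hden
          have hgc : g ∈ closure ((span ℂ (Set.range fun i : Δ => f (i : ℕ))) : Set H) := hg
          rw [Metric.mem_closure_iff] at hgc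
          obtain ⟨g', hg'mem, hdist⟩ := hgc δ hδpos
          rw [dist_eq_norm] at hdist
          obtain ⟨F, hFΔ, hFli, hFg⟩ := select_indep f Δ g' hg'mem
          have hlowF := lower_on_span f hA F (fun a => hb F hFli a) g' hFg
          have s1 : Real.sqrt A * ‖g'‖ ≤ Real.sqrt (∑ i ∈ F, ‖⟪g', f i⟫‖ ^ 2) := by
            have h := Real.sqrt_le_sqrt hlowF
            rwa [Real.sqrt_mul hA.le, Real.sqrt_sq (norm_nonneg _)] at h
          have s2 : Real.sqrt (∑ i ∈ F, ‖⟪g', f i⟫‖ ^ 2) ≤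
              Real.sqrt (∑ i ∈ F, ‖⟪g, f i⟫‖ ^ 2) +
              Real.sqrt (∑ i ∈ F, ‖⟪g' - g, f i⟫‖ ^ 2) := by
            have h := aux_mink F (fun i => ⟪g, f i⟫) (fun i => ⟪g' - g, f i⟫)
            have heq : ∀ i, ⟪g, f i⟫ + ⟪g' - g, f i⟫ = ⟪g', f i⟫ := fun i => by
              rw [← inner_add_left, add_sub_cancel]
            simp_rw [heq] at h
            exact h
          have s3 : Real.sqrt (∑ i ∈ F, ‖⟪g, f i⟫‖ ^ 2) ≤
              Real.sqrt (∑' i : Δ, ‖⟪g, f (i : ℕ)⟫‖ ^ 2) := by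
            refine Real.sqrt_le_sqrt ?_
            have hmap := Summable.sum_le_tsum (f := fun i : Δ => ‖⟪g, f (i : ℕ)⟫‖ ^ 2)
              (F.attach.map (⟨fun (i : {x // x ∈ F}) => (⟨(i : ℕ), hFΔ (Finset.mem_coe.mpr i.2)⟩ : Δ),
                fun x y h => Subtype.ext (by have h' := congrArg Subtype.val h; exact h')⟩ :
                {x // x ∈ F} ↪ Δ))
              (fun i _ => sq_nonneg _) hsumm
            rw [Finset.sum_map] at hmap
            have hconv : ∑ i ∈ F.attach,
                ‖⟪g, f (((⟨(i : ℕ), hFΔ (Finset.mem_coe.mpr i.2)⟩ : Δ)) : ℕ)⟫‖ ^ 2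
                = ∑ i ∈ F, ‖⟪g, f i⟫‖ ^ 2 := by
              refine (Finset.sum_congr rfl fun i _ => rfl).trans
                (Finset.sum_attach F (fun i => ‖⟪g, f i⟫‖ ^ 2))
            rw [← hconv]
            exact hmap
          have s4 : Real.sqrt (∑ i ∈ F, ‖⟪g' - g, f i⟫‖ ^ 2) ≤ Real.sqrt B₀ * δ := by
            have hfull' := hf.2 (g' - g) trivial
            have hle : ∑ i ∈ F, ‖⟪g' - g, f i⟫‖ ^ 2 ≤ B₀ * ‖g' - g‖ ^ 2 :=
              le_trans (Summable.sum_le_tsum F (fun i _ => sq_nonneg _) hfull'.1) hfull'.2.2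
            have h := Real.sqrt_le_sqrt hle
            rw [Real.sqrt_mul hB₀.le, Real.sqrt_sq (norm_nonneg _)] at h
            refine h.trans ?_
            have hsub : ‖g' - g‖ ≤ δ := by rw [norm_sub_rev]; exact hdist.le
            exact mul_le_mul_of_nonneg_left hsub (Real.sqrt_nonneg _)
          have s5 : ‖g‖ ≤ ‖g'‖ + δ := by
            have h := norm_sub_norm_le g g'
            linarith [hdist.le]
          have total : Real.sqrt A * ‖g‖ ≤
              Real.sqrt (∑' i : Δ, ‖⟪g, f (i : ℕ)⟫‖ ^ 2) +
              (Real.sqrt A + Real.sqrt B₀) * δ := by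
            calc Real.sqrt A * ‖g‖ ≤ Real.sqrt A * (‖g'‖ + δ) :=
                  mul_le_mul_of_nonneg_left s5 (Real.sqrt_nonneg _)
              _ = Real.sqrt A * ‖g'‖ + Real.sqrt A * δ := by ring
              _ ≤ Real.sqrt (∑ i ∈ F, ‖⟪g', f i⟫‖ ^ 2) + Real.sqrt A * δ :=
                  add_le_add_left s1 _
              _ ≤ (Real.sqrt (∑ i ∈ F, ‖⟪g, f i⟫‖ ^ 2) +
                    Real.sqrt (∑ i ∈ F, ‖⟪g' - g, f i⟫‖ ^ 2)) + Real.sqrt A * δ :=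
                  add_le_add_left s2 _
              _ ≤ (Real.sqrt (∑' i : Δ, ‖⟪g, f (i : ℕ)⟫‖ ^ 2) + Real.sqrt B₀ * δ) +
                    Real.sqrt A * δ := add_le_add_left (add_le_add s3 s4) _
              _ = Real.sqrt (∑' i : Δ, ‖⟪g, f (i : ℕ)⟫‖ ^ 2) +
                    (Real.sqrt A + Real.sqrt B₀) * δ := by ring
          have hδε : (Real.sqrt A + Real.sqrt B₀) * δ ≤ ε := by
            have heq : (Real.sqrt A + Real.sqrt B₀ + 1) * δ = ε := by
              rw [hδ]
              field_simp
            nlinarith [hδpos.le]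
          linarith
        have hsq := pow_le_pow_left₀ (by positivity) key 2
        rwa [mul_pow, Real.sq_sqrt hA.le, Real.sq_sqrt hTnn] at hsq
      · -- upper bound
        exact le_trans (Summable.tsum_le_tsum_of_inj Subtype.val Subtype.val_injective
          (fun c _ => sq_nonneg _) (fun i => le_refl _) hsumm hsummAll) hfull.2.2

end
end

section
/- Every Riesz frame (f_i)_{i=1}^∞ for a Hilbert space H contains a subfamily (f_i)_{i∈Δ} which is a Riesz basis for H. -/
open scoped ComplexInnerProductSpace
open Submodule Filter

noncomputable section

variable {H : Type*} [NormedAddCommGroup H] [InnerProductSpace ℂ H] [CompleteSpace H]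

set_option linter.unusedSectionVars false

-- finite-dim span is closed, so closedSpan of a finite image is the span
lemma closedSpan_finset (f : ℕ → H) (t : Finset ℕ) :
    closedSpan (f '' ↑t) = Submodule.span ℂ (f '' ↑t) := by
  have : FiniteDimensional ℂ (Submodule.span ℂ (f '' (t : Set ℕ))) :=
    FiniteDimensional.span_of_finite ℂ ((t.finite_toSet).image f)
  exact IsClosed.submodule_topologicalClosure_eq
    (Submodule.closed_of_finiteDimensional _)

-- frame bounds restricted to a finite subfamily, with finite sums
lemma frame_finset (f : ℕ → H) {A B : ℝ}
    (hfr : ∀ Δ : Set ℕ, IsFrameSequence (fun i : Δ => f i) A B)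
    (t : Finset ℕ) (g : H) (hg : g ∈ Submodule.span ℂ (f '' ↑t)) :
    A * ‖g‖ ^ 2 ≤ ∑ i ∈ t, ‖⟪g, f i⟫‖ ^ 2 ∧
    ∑ i ∈ t, ‖⟪g, f i⟫‖ ^ 2 ≤ B * ‖g‖ ^ 2 := by
  obtain ⟨-, h2⟩ := hfr (↑t : Set ℕ)
  have hrange : Set.range (fun i : (↑t : Set ℕ) => f i) = f '' ↑t :=
    (Set.image_eq_range f (↑t : Set ℕ)).symm
  have hg' : g ∈ closedSpan (Set.range (fun i : (↑t : Set ℕ) => f i)) := by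
    rw [hrange, closedSpan_finset]; exact hg
  obtain ⟨-, hlow, hup⟩ := h2 g hg'
  have hsum : (∑' i : (↑t : Set ℕ), ‖⟪g, f i⟫‖ ^ 2) = ∑ i ∈ t, ‖⟪g, f i⟫‖ ^ 2 := by
    rw [tsum_fintype]
    exact Finset.sum_finset_coe (fun i => ‖⟪g, f i⟫‖ ^ 2) t
  rw [hsum] at hlow hup
  exact ⟨hlow, hup⟩

lemma key_lemma (f : ℕ → H) {A B : ℝ} (hA : 0 < A)
    (hfr : ∀ Δ : Set ℕ, IsFrameSequence (fun i : Δ => f i) A B)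
    (t : Finset ℕ) (hli : LinearIndependent ℂ (fun i : (↑t : Set ℕ) => f i))
    (b : ℕ → ℂ) :
    Real.sqrt A * Real.sqrt (∑ i ∈ t, ‖b i‖ ^ 2) ≤ ‖∑ i ∈ t, b i • f i‖ ∧
    ‖∑ i ∈ t, b i • f i‖ ≤ Real.sqrt B * Real.sqrt (∑ i ∈ t, ‖b i‖ ^ 2) := by
  classical
  set V : Submodule ℂ H := Submodule.span ℂ (f '' ↑t) with hV
  set S : H := ∑ i ∈ t, b i • f i with hS
  set N2 : ℝ := ∑ i ∈ t, ‖b i‖ ^ 2 with hN2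
  have hN2nn : 0 ≤ N2 := Finset.sum_nonneg fun i _ => by positivity
  have hSmem : S ∈ V := by
    refine Submodule.sum_mem _ fun i hi => Submodule.smul_mem _ _ ?_
    exact Submodule.subset_span (Set.mem_image_of_mem f hi)
  have hinnerS : ∀ g : H, ⟪g, S⟫ = ∑ i ∈ t, b i * ⟪g, f i⟫ := by
    intro g
    rw [hS, inner_sum]
    exact Finset.sum_congr rfl fun i _ => inner_smul_right _ _ _
  -- upper bound
  have upper : ‖S‖ ≤ Real.sqrt B * Real.sqrt N2 := by
    have hframe := (frame_finset f hfr t S hSmem).2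
    have hCS : (∑ i ∈ t, ‖b i‖ * ‖⟪S, f i⟫‖) ≤
        Real.sqrt N2 * Real.sqrt (∑ i ∈ t, ‖⟪S, f i⟫‖ ^ 2) := by
      have h := Finset.sum_mul_sq_le_sq_mul_sq t (fun i => ‖b i‖) (fun i => ‖⟪S, f i⟫‖)
      have h' := Real.sqrt_le_sqrt h
      rw [Real.sqrt_sq (Finset.sum_nonneg fun i _ => by positivity),
        Real.sqrt_mul (Finset.sum_nonneg fun i _ => by positivity)] at h'
      exact h'
    have hnorm : ‖S‖ ^ 2 ≤ ∑ i ∈ t, ‖b i‖ * ‖⟪S, f i⟫‖ := by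
      have h1 : (‖S‖ : ℝ) ^ 2 = ‖(⟪S, S⟫ : ℂ)‖ := by
        rw [inner_self_eq_norm_sq_to_K]; simp
      rw [h1, hinnerS S]
      refine (norm_sum_le _ _).trans ?_
      exact le_of_eq (Finset.sum_congr rfl fun i _ => norm_mul _ _)
    have hsqB : Real.sqrt (∑ i ∈ t, ‖⟪S, f i⟫‖ ^ 2) ≤ Real.sqrt B * ‖S‖ := by
      have := Real.sqrt_le_sqrt hframe
      rwa [Real.sqrt_mul' _ (sq_nonneg ‖S‖), Real.sqrt_sq (norm_nonneg S)] at this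
    rcases eq_or_lt_of_le (norm_nonneg S) with h0 | h0
    · rw [← h0]; positivity
    · have : ‖S‖ ^ 2 ≤ Real.sqrt N2 * (Real.sqrt B * ‖S‖) :=
        hnorm.trans (hCS.trans (by
          exact mul_le_mul_of_nonneg_left hsqB (Real.sqrt_nonneg _)))
      nlinarith [Real.sqrt_nonneg N2, Real.sqrt_nonneg B]
  -- lower bound
  have lower : Real.sqrt A * Real.sqrt N2 ≤ ‖S‖ := by
    rcases eq_or_lt_of_le hN2nn with h0 | hN2pos
    · rw [← h0, Real.sqrt_zero, mul_zero]; exact norm_nonneg _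
    · -- construct dual vector
      haveI : FiniteDimensional ℂ V := FiniteDimensional.span_of_finite ℂ ((t.finite_toSet).image f)
      haveI : Fintype (↑t : Set ℕ) := FinsetCoe.fintype t
      set Φ : V →ₗ[ℂ] ((↑t : Set ℕ) → ℂ) :=
        LinearMap.pi (fun i : (↑t : Set ℕ) => ((innerSL ℂ (f (i : ℕ))).toLinearMap.comp V.subtype))
        with hΦ
      have hinj : Function.Injective Φ := by
        rw [← LinearMap.ker_eq_bot, LinearMap.ker_eq_bot']
        intro g hg
        have horth : ∀ u ∈ V, ⟪u, (g : H)⟫ = 0 := by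
          intro u hu
          refine Submodule.span_induction ?_ ?_ ?_ ?_ hu
          · rintro x ⟨i, hi, rfl⟩
            exact congrFun hg ⟨i, hi⟩
          · exact inner_zero_left _
          · intro x y _ _ hx hy; rw [inner_add_left, hx, hy, add_zero]
          · intro c x _ hx; rw [inner_smul_left, hx, mul_zero]
        have : ⟪(g : H), (g : H)⟫ = (0 : ℂ) := horth _ g.2
        ext1
        exact inner_self_eq_zero.mp this
      have hfr' : Module.finrank ℂ V = Module.finrank ℂ ((↑t : Set ℕ) → ℂ) := by
        rw [hV, Set.image_eq_range f (↑t : Set ℕ), finrank_span_eq_card hli,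
          Module.finrank_fintype_fun_eq_card]
      have hsurj : Function.Surjective Φ :=
        (LinearMap.injective_iff_surjective_of_finrank_eq_finrank hfr').mp hinj
      obtain ⟨g₀, hg₀⟩ := hsurj (fun i : (↑t : Set ℕ) => b (i : ℕ))
      have hgi : ∀ i ∈ t, ⟪f i, (g₀ : H)⟫ = b i := fun i hi => congrFun hg₀ ⟨i, hi⟩
      have hgS : ⟪(g₀ : H), S⟫ = (N2 : ℂ) := by
        rw [hinnerS]
        rw [hN2]
        push_cast
        refine Finset.sum_congr rfl fun i hi => ?_
        rw [← inner_conj_symm, hgi i hi]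
        rw [Complex.mul_conj']
      have hg0frame : A * ‖(g₀ : H)‖ ^ 2 ≤ N2 := by
        have h := (frame_finset f hfr t (g₀ : H) g₀.2).1
        refine h.trans (le_of_eq ?_)
        rw [hN2]
        refine Finset.sum_congr rfl fun i hi => ?_
        rw [← inner_conj_symm, hgi i hi]
        simp
      have hdual : N2 ≤ ‖(g₀ : H)‖ * ‖S‖ := by
        calc N2 = ‖(⟪(g₀ : H), S⟫ : ℂ)‖ := by rw [hgS]; simp [abs_of_nonneg hN2nn]
        _ ≤ ‖(g₀ : H)‖ * ‖S‖ := norm_inner_le_norm _ _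
      have h1 : Real.sqrt A * ‖(g₀ : H)‖ ≤ Real.sqrt N2 := by
        have : Real.sqrt (A * ‖(g₀ : H)‖ ^ 2) ≤ Real.sqrt N2 := Real.sqrt_le_sqrt hg0frame
        rwa [Real.sqrt_mul' _ (sq_nonneg _), Real.sqrt_sq (norm_nonneg _)] at this
      have hsq : Real.sqrt N2 * Real.sqrt N2 = N2 := Real.mul_self_sqrt hN2nn
      nlinarith [Real.sqrt_pos.mpr hN2pos, Real.sqrt_nonneg A, Real.sqrt_pos.mpr hA,
        norm_nonneg S, norm_nonneg (g₀ : H),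
        mul_le_mul_of_nonneg_right h1 (norm_nonneg S),
        mul_le_mul_of_nonneg_left hdual (Real.sqrt_nonneg A)]
  exact ⟨lower, upper⟩

def sel (f : ℕ → H) : ℕ → Prop
  | n => f n ∉ closedSpan (f '' {i | ∃ _ : i < n, sel f i})

lemma sel_iff (f : ℕ → H) (n : ℕ) :
    sel f n ↔ f n ∉ closedSpan (f '' {i | i < n ∧ sel f i}) := by
  rw [sel]; simp [exists_prop]

lemma closedSpan_mono {s u : Set H} (h : s ⊆ u) : closedSpan s ≤ closedSpan u :=
  Submodule.topologicalClosure_mono (Submodule.span_mono h)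

lemma span_le_closedSpan (s : Set H) : Submodule.span ℂ s ≤ closedSpan s :=
  Submodule.le_topologicalClosure _

lemma li_sel (f : ℕ → H) : ∀ t : Finset ℕ, ((↑t : Set ℕ) ⊆ {n | sel f n}) →
    LinearIndependent ℂ (fun i : (↑t : Set ℕ) => f i) := by
  intro t
  induction t using Finset.strongInduction with
  | _ t ih =>
    intro ht
    rcases t.eq_empty_or_nonempty with rfl | hne
    · rw [Finset.coe_empty]
      exact linearIndependent_empty_type
    · set m := t.max' hne with hm
      have hmt : m ∈ t := t.max'_mem hne
      have hcoe : (↑t : Set ℕ) = insert m (↑(t.erase m) : Set ℕ) := by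
        rw [← Finset.coe_insert, Finset.insert_erase hmt]
      rw [hcoe]
      show LinearIndepOn ℂ f _
      rw [linearIndepOn_insert (by simp)]
      refine ⟨ih (t.erase m) (Finset.erase_ssubset hmt)
        ((Finset.coe_subset.mpr (Finset.erase_subset m t)).trans ht), ?_⟩
      have hselm : sel f m := ht hmt
      rw [sel_iff] at hselm
      intro hmem
      apply hselm
      have hsub : f '' (↑(t.erase m) : Set ℕ) ⊆ f '' {i | i < m ∧ sel f i} := by
        refine Set.image_mono ?_
        intro i hi
        simp only [Finset.coe_erase, Set.mem_diff, Set.mem_singleton_iff] at hi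
        obtain ⟨hit, him⟩ := hi
        exact ⟨lt_of_le_of_ne (t.le_max' i hit) (by simpa using him), ht hit⟩
      exact (Submodule.span_mono hsub).trans (span_le_closedSpan _) hmem

lemma dense_sel (f : ℕ → H) (n : ℕ) : f n ∈ closedSpan (f '' {k | sel f k}) := by
  by_cases h : sel f n
  · exact span_le_closedSpan _ (Submodule.subset_span (Set.mem_image_of_mem f h))
  · rw [sel_iff, not_not] at h
    exact closedSpan_mono (Set.image_mono (fun i hi => hi.2)) h

/-- **Corollary 2.2 (Christensen).** Every Riesz frame contains a Riesz basis. -/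
theorem riesz_frame_contains_riesz_basis (f : ℕ → H) (hf : IsRieszFrame f) :
    ∃ Δ : Set ℕ, IsRieszBasis (fun i : Δ => f i) := by
  classical
  obtain ⟨A, B, hA, hB, htop, hfr⟩ := hf
  refine ⟨{n | sel f n}, ?_, Real.sqrt A, Real.sqrt B,
    Real.sqrt_pos.mpr hA, Real.sqrt_pos.mpr hB, ?_⟩
  · -- completeness
    rw [← Set.image_eq_range f {n | sel f n}]
    rw [← top_le_iff, ← htop]
    refine Submodule.topologicalClosure_minimal _ ?_ (Submodule.isClosed_topologicalClosure _)
    rw [Submodule.span_le]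
    rintro x ⟨n, rfl⟩
    exact dense_sel f n
  · intro a
    set t : Finset ℕ := a.support.image Subtype.val with htdef
    have hts : (↑t : Set ℕ) ⊆ {n | sel f n} := by
      intro i hi
      simp only [htdef, Finset.coe_image, Set.mem_image] at hi
      obtain ⟨j, -, rfl⟩ := hi
      exact j.2
    set b : ℕ → ℂ := fun n => if h : sel f n then a ⟨n, h⟩ else 0 with hbdef
    have hb : ∀ i : {n | sel f n}, b ↑i = a i := by
      intro i; exact dif_pos i.2
    have hinjval : ∀ x ∈ a.support, ∀ y ∈ a.support,
        (Subtype.val x : ℕ) = Subtype.val y → x = y :=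
      fun x _ y _ h => Subtype.val_injective h
    have h1 : ∑ i ∈ a.support, a i • f ↑i = ∑ i ∈ t, b i • f i := by
      rw [htdef, Finset.sum_image hinjval]
      exact Finset.sum_congr rfl fun i _ => by rw [hb i]
    have h2 : ∑ i ∈ a.support, ‖a i‖ ^ 2 = ∑ i ∈ t, ‖b i‖ ^ 2 := by
      rw [htdef, Finset.sum_image hinjval]
      exact Finset.sum_congr rfl fun i _ => by rw [hb i]
    rw [h1, h2]
    exact key_lemma f hA hfr t (li_sel f t hts) b

end
end

section
/- Let (f_i)_{i=1}^∞ be a frame for a Hilbert space H with frame bounds A, B. Let Δ ⊆ ℕ and let P be the orthogonal projection of H onto the closed linear span of (f_i)_{i∈Δ}. Then ((I − P)f_i)_{i∈Δᶜ} is a frame for its closed linear span (which equals (I − P)(H)) with frame bounds A, B. -/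
open scoped ComplexInnerProductSpace
open Submodule Filter

noncomputable section

variable {H : Type*} [NormedAddCommGroup H] [InnerProductSpace ℂ H] [CompleteSpace H]

/-- **Proposition 2.3 (2).** If `f` is a frame for `H` with bounds `A, B`, `Δ ⊆ ℕ` and `P` is the
orthogonal projection onto the closed span of `(f i)_{i ∈ Δ}`, then `((I - P) f i)_{i ∈ Δᶜ}` is a
frame for its closed linear span — which equals `Kᗮ = (I - P)(H)` — with frame bounds `A, B`. -/
theorem projected_complement_is_frame_sequence
    (f : ℕ → H) (A B : ℝ) (hA : 0 < A) (hB : 0 < B)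
    (hf : IsFrameFor f (⊤ : Submodule ℂ H) A B) (Δ : Set ℕ) :
    closedSpan (Set.range (fun i : ↥Δᶜ => f i - projSpan (f '' Δ) (f i)))
        = (closedSpan (f '' Δ))ᗮ ∧
    IsFrameFor (fun i : ↥Δᶜ => f i - projSpan (f '' Δ) (f i))
      (closedSpan (f '' Δ))ᗮ A B := by
  classical
  set K := closedSpan (f '' Δ) with hKdef
  have hKclosed : IsClosed (K : Set H) := Submodule.isClosed_topologicalClosure _
  haveI : CompleteSpace K := hKclosed.completeSpace_coe
  set g : ↥Δᶜ → H := fun i => f i - projSpan (f '' Δ) (f i) with hgdef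
  have hfK : ∀ i ∈ Δ, f i ∈ K :=
    fun i hi => Submodule.le_topologicalClosure _ (Submodule.subset_span ⟨i, hi, rfl⟩)
  have hproj : ∀ v : H, projSpan (f '' Δ) v = (orthogonalProjection K v : H) := fun v => rfl
  have hgO : ∀ i : ↥Δᶜ, g i ∈ Kᗮ := by
    intro i
    simpa [hgdef, hproj] using sub_orthogonalProjection_mem_orthogonal (K := K) (f i)
  have hinner : ∀ h ∈ Kᗮ, ∀ i : ↥Δᶜ, ⟪h, g i⟫ = ⟪h, f i⟫ := by
    intro h hh i
    have hP : (orthogonalProjection K (f i) : H) ∈ K := SetLike.coe_mem _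
    have h0 : ⟪h, (orthogonalProjection K (f i) : H)⟫ = 0 :=
      (Submodule.mem_orthogonal' K h).1 hh _ hP
    simp [hgdef, hproj, inner_sub_right, h0]
    exact h0
  have hzero : ∀ h ∈ Kᗮ, ∀ i ∈ Δ, ⟪h, f i⟫ = 0 := by
    intro h hh i hi
    exact (Submodule.mem_orthogonal' K h).1 hh _ (hfK i hi)
  have hsum : ∀ h ∈ Kᗮ, Summable (fun i : ↥Δᶜ => ‖⟪h, g i⟫‖ ^ 2) ∧
      ∑' i : ↥Δᶜ, ‖⟪h, g i⟫‖ ^ 2 = ∑' i : ℕ, ‖⟪h, f i⟫‖ ^ 2 := by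
    intro h hh
    obtain ⟨hS, -, -⟩ := hf.2 h Submodule.mem_top
    have heq : (fun i : ↥Δᶜ => ‖⟪h, g i⟫‖ ^ 2) = fun i : ↥Δᶜ => ‖⟪h, f i⟫‖ ^ 2 := by
      funext i; rw [hinner h hh i]
    have hSc : Summable fun i : ↥Δᶜ => ‖⟪h, f i⟫‖ ^ 2 := hS.subtype _
    refine ⟨heq ▸ hSc, ?_⟩
    rw [heq]
    have h0 : ∑' i : ↥Δ, ‖⟪h, f i⟫‖ ^ 2 = 0 := by
      have hz' : ∀ i : ↥Δ, ‖⟪h, f (i : ℕ)⟫‖ ^ 2 = 0 := by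
        intro i; simp [hzero h hh i i.2]
      rw [tsum_congr hz', tsum_zero]
    have hadd := hS.tsum_subtype_add_tsum_subtype_compl Δ
    rw [h0, zero_add] at hadd
    exact hadd
  have frame : IsFrameFor g Kᗮ A B := by
    refine ⟨hgO, fun h hh => ?_⟩
    obtain ⟨hS, h1, h2⟩ := hf.2 h Submodule.mem_top
    obtain ⟨hSc, heq⟩ := hsum h hh
    exact ⟨hSc, by rw [heq]; exact h1, by rw [heq]; exact h2⟩
  refine ⟨?_, frame⟩
  set M := closedSpan (Set.range g) with hMdef
  have hMclosed : IsClosed (M : Set H) := Submodule.isClosed_topologicalClosure _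
  haveI : CompleteSpace M := hMclosed.completeSpace_coe
  have hMle : M ≤ Kᗮ := by
    have hsle : Submodule.span ℂ (Set.range g) ≤ Kᗮ := by
      rw [Submodule.span_le]; rintro _ ⟨i, rfl⟩; exact hgO i
    exact Submodule.topologicalClosure_minimal _ hsle K.isClosed_orthogonal
  refine le_antisymm hMle ?_
  intro h hh
  set h' := h - (orthogonalProjection M h : H) with hh'def
  have hPM : (orthogonalProjection M h : H) ∈ M := SetLike.coe_mem _
  have hh'O : h' ∈ Mᗮ := Submodule.sub_starProjection_mem_orthogonal (K := M) h
  have hh'K : h' ∈ Kᗮ := Kᗮ.sub_mem hh (hMle hPM)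
  have hz : ∀ i : ℕ, ⟪h', f i⟫ = 0 := by
    intro i
    by_cases hi : i ∈ Δ
    · exact hzero h' hh'K i hi
    · have hgi : g ⟨i, hi⟩ ∈ M :=
        Submodule.le_topologicalClosure _ (Submodule.subset_span ⟨⟨i, hi⟩, rfl⟩)
      have h0 : ⟪h', g ⟨i, hi⟩⟫ = 0 := (Submodule.mem_orthogonal' M h').1 hh'O _ hgi
      rw [hinner h' hh'K ⟨i, hi⟩] at h0
      exact h0
  obtain ⟨hS, h1, -⟩ := hf.2 h' Submodule.mem_top
  have htz : ∑' i : ℕ, ‖⟪h', f i⟫‖ ^ 2 = 0 := by simp [hz]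
  have hn : A * ‖h'‖ ^ 2 ≤ 0 := htz ▸ h1
  have h2 : ‖h'‖ ^ 2 ≤ 0 := le_of_mul_le_mul_left (by simpa using hn) hA
  have h3 : ‖h'‖ ^ 2 = 0 := le_antisymm h2 (sq_nonneg _)
  have hh0 : h' = 0 := norm_eq_zero.1 (pow_eq_zero_iff two_ne_zero |>.1 h3)
  have : h = (orthogonalProjection M h : H) := by
    rw [hh'def, sub_eq_zero] at hh0; exact hh0
  exact this ▸ hPM

end
end

section
/- Let (f_i)_{i=1}^∞ be a Riesz frame for a Hilbert space H with Riesz frame bounds A, B, and suppose a subfamily (g_i)_{i=1}^∞ of the frame is an orthonormal basis of H; let (h_i)_{i∈Γ} be the remaining elements of the frame. Then every nonzero coordinate of each h_i satisfies A ≤ |⟨h_i, g_j⟩|² ≤ B, and consequently there is a natural number k (one may take k = ⌊B/A⌋) such that each h_i has at most k nonzero coordinates |{j : ⟨h_i, g_j⟩ ≠ 0}| ≤ k. -/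
open scoped ComplexInnerProductSpace
open Submodule Filter

noncomputable section

variable {H : Type*} [NormedAddCommGroup H] [InnerProductSpace ℂ H] [CompleteSpace H]

/-- **Theorem 2.4 ("moreover" part).** If `f` is a Riesz frame with Riesz frame bounds `A, B`
and the subfamily `(f i)_{i ∈ Δg}` is an orthonormal basis of `H`, then every nonzero coordinate
of each remaining frame element satisfies `A ≤ |⟨h_i, g_j⟩|² ≤ B`, and consequently each remaining
element has at most `k = ⌊B / A⌋` nonzero coordinates. -/
theorem riesz_frame_coordinates_bounded
    (f : ℕ → H) (A B : ℝ) (hA : 0 < A) (hB : 0 < B)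
    (hf : IsRieszFrameWith f A B)
    (Δg : Set ℕ)
    (hON : Orthonormal ℂ (fun i : Δg => f i))
    (htotal : closedSpan (f '' Δg) = ⊤) :
    (∀ i ∈ Δgᶜ, ∀ j ∈ Δg, ⟪f i, f j⟫ ≠ 0 →
        A ≤ ‖⟪f i, f j⟫‖ ^ 2 ∧ ‖⟪f i, f j⟫‖ ^ 2 ≤ B) ∧
    (∀ i ∈ Δgᶜ, {j | j ∈ Δg ∧ ⟪f i, f j⟫ ≠ 0}.Finite ∧
        {j | j ∈ Δg ∧ ⟪f i, f j⟫ ≠ 0}.ncard ≤ ⌊B / A⌋₊) := by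
  classical
  obtain ⟨htop, hframe⟩ := hf
  have hrange : ∀ Δ : Set ℕ, Set.range (fun k : Δ => f k) = f '' Δ :=
    fun Δ => (Set.image_eq_range f Δ).symm
  have hU : closedSpan (Set.range (fun k : (Set.univ : Set ℕ) => f k)) = ⊤ := by
    rw [hrange, Set.image_univ]; exact htop
  have hnorm1 : ∀ j, (hj : j ∈ Δg) → ‖f j‖ = 1 := fun j hj => hON.1 ⟨j, hj⟩
  have hself : ∀ i : ℕ, ‖⟪f i, f i⟫‖ = ‖f i‖ ^ 2 := by
    intro i
    rw [inner_self_eq_norm_sq_to_K (𝕜 := ℂ)]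
    simp [norm_pow]
  -- ‖f i‖ ^ 2 ≤ B for all i
  have hnormB : ∀ i : ℕ, ‖f i‖ ^ 2 ≤ B := by
    intro i
    obtain ⟨hsummable, -, hup⟩ := (hframe Set.univ).2 (f i) (by rw [hU]; trivial)
    have h1 : ‖⟪f i, f ((⟨i, Set.mem_univ i⟩ : (Set.univ : Set ℕ)) : ℕ)⟫‖ ^ 2
        ≤ ∑' k : (Set.univ : Set ℕ), ‖⟪f i, f (k : ℕ)⟫‖ ^ 2 :=
      Summable.le_tsum hsummable ⟨i, Set.mem_univ i⟩ (fun _ _ => sq_nonneg _)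
    rw [hself i] at h1
    have h2 := h1.trans hup
    nlinarith [sq_nonneg (‖f i‖ ^ 2 - B), sq_nonneg (‖f i‖)]
  -- the Hilbert basis
  have hsp : ⊤ ≤ (span ℂ (Set.range (fun l : Δg => f l))).topologicalClosure := by
    rw [hrange]
    exact le_of_eq htotal.symm
  let b : HilbertBasis Δg ℂ H := HilbertBasis.mk hON hsp
  have hb : ∀ l : Δg, b l = f l := fun l => congrFun (HilbertBasis.coe_mk hON hsp) l
  -- Part 1
  have key : ∀ i ∈ Δgᶜ, ∀ j ∈ Δg, ⟪f i, f j⟫ ≠ 0 →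
      A ≤ ‖⟪f i, f j⟫‖ ^ 2 ∧ ‖⟪f i, f j⟫‖ ^ 2 ≤ B := by
    intro i hi j hj hne
    have hsymm : ‖⟪f i, f j⟫‖ = ‖⟪f j, f i⟫‖ := norm_inner_symm _ _
    set c : ℂ := ⟪f j, f i⟫ with hc
    have hcne : c ≠ 0 := by
      intro h
      apply hne
      rw [← inner_conj_symm, ← hc, h, map_zero]
    constructor
    · -- lower bound
      set Δ : Set ℕ := insert i (Δg \ {j}) with hΔ
      set j' : Δg := ⟨j, hj⟩ with hj'
      -- basis expansion of f i
      have hsum : HasSum (fun l : Δg => ⟪f (l : ℕ), f i⟫ • f (l : ℕ)) (f i) := by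
        have h := b.hasSum_repr (f i)
        convert h using 2 with l
        rw [b.repr_apply_apply, hb l]
      have hw : HasSum (fun l : Δg =>
          (⟪f (l : ℕ), f i⟫ • f (l : ℕ) - if l = j' then c • f j else 0))
          (f i - c • f j) := by
        have h2 : HasSum (fun l : Δg => if l = j' then c • f j else 0) (c • f j) :=
          hasSum_ite_eq j' (c • f j)
        exact hsum.sub h2
      have hw_mem : f i - c • f j ∈ closedSpan (f '' (Δg \ {j})) := by
        have hcl : f i - c • f j ∈ closure ((span ℂ (f '' (Δg \ {j})) : Submodule ℂ H) : Set H) := by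
          refine mem_closure_of_tendsto hw (Eventually.of_forall fun s => ?_)
          refine Submodule.sum_mem _ fun l _ => ?_
          by_cases hl : l = j'
          · subst hl
            simp [hc, hj']
          · rw [if_neg hl, sub_zero]
            refine Submodule.smul_mem _ _ (Submodule.subset_span ?_)
            exact ⟨(l : ℕ), ⟨l.2, fun h => hl (Subtype.ext h)⟩, rfl⟩
        rwa [← Submodule.topologicalClosure_coe] at hcl
      have hmono : closedSpan (f '' (Δg \ {j})) ≤ closedSpan (f '' Δ) :=
        Submodule.topologicalClosure_mono (Submodule.span_mono
          (Set.image_mono (Set.subset_insert i _)))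
      have hfi_mem : f i ∈ closedSpan (f '' Δ) :=
        Submodule.le_topologicalClosure _
          (Submodule.subset_span ⟨i, Set.mem_insert i _, rfl⟩)
      have hv_mem : c • f j ∈ closedSpan (f '' Δ) := by
        have := Submodule.sub_mem _ hfi_mem (hmono hw_mem)
        simpa using this
      obtain ⟨hsummable, hlow, -⟩ := (hframe Δ).2 (c • f j) (by rw [hrange]; exact hv_mem)
      set i' : Δ := ⟨i, Set.mem_insert i _⟩ with hi'
      have htsum : ∑' k : Δ, ‖⟪c • f j, f (k : ℕ)⟫‖ ^ 2 = (‖c‖ ^ 2) ^ 2 := by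
        rw [tsum_eq_single i' ?_]
        · rw [inner_smul_left, ← hc]
          rw [norm_mul, RCLike.norm_conj]
          ring_nf
        · intro k hk
          have hkΔg : (k : ℕ) ∈ Δg \ {j} := by
            rcases k.2 with h | h
            · exact absurd (Subtype.ext h) hk
            · exact h
          rw [inner_smul_left]
          have : ⟪f j, f (k : ℕ)⟫ = 0 := by
            have hne' : j' ≠ (⟨(k : ℕ), hkΔg.1⟩ : Δg) := by
              intro h
              exact hkΔg.2 (by simpa using congrArg Subtype.val h.symm)
            exact hON.2 hne'
          rw [this, mul_zero, norm_zero]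
          simp
      have hnv : ‖c • f j‖ = ‖c‖ := by
        rw [norm_smul, hnorm1 j hj, mul_one]
      rw [htsum, hnv] at hlow
      have hcpos : 0 < ‖c‖ ^ 2 := pow_pos (norm_pos_iff.mpr hcne) 2
      have hAc : A ≤ ‖c‖ ^ 2 := by nlinarith
      rw [hsymm]
      exact hAc
    · -- upper bound
      obtain ⟨hsummable, -, hup⟩ := (hframe Set.univ).2 (f j) (by rw [hU]; trivial)
      have h1 : ‖⟪f j, f ((⟨i, Set.mem_univ i⟩ : (Set.univ : Set ℕ)) : ℕ)⟫‖ ^ 2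
          ≤ ∑' k : (Set.univ : Set ℕ), ‖⟪f j, f (k : ℕ)⟫‖ ^ 2 :=
        Summable.le_tsum hsummable ⟨i, Set.mem_univ i⟩ (fun _ _ => sq_nonneg _)
      have h2 := h1.trans hup
      rw [hnorm1 j hj] at h2
      simpa [hsymm] using h2.trans_eq (by ring)
  refine ⟨key, ?_⟩
  -- Part 2
  intro i hi
  set S : Set ℕ := {j | j ∈ Δg ∧ ⟪f i, f j⟫ ≠ 0} with hS
  have hcard : ∀ T : Finset ℕ, ↑T ⊆ S → T.card ≤ ⌊B / A⌋₊ := by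
    intro T hT
    have hTg : ∀ x : T, (x : ℕ) ∈ Δg := fun x => (hT x.2).1
    have hONT : Orthonormal ℂ (fun x : T => f (x : ℕ)) := by
      have := hON.comp (fun x : T => (⟨(x : ℕ), hTg x⟩ : Δg))
        (fun a b h => Subtype.ext (by simpa using congrArg Subtype.val h))
      exact this
    have hbessel : ∑ x : T, ‖⟪f (x : ℕ), f i⟫‖ ^ 2 ≤ ‖f i‖ ^ 2 :=
      hONT.sum_inner_products_le (f i)
    have hlow : (T.card : ℝ) * A ≤ ∑ x : T, ‖⟪f (x : ℕ), f i⟫‖ ^ 2 := by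
      have : ∀ x : T, A ≤ ‖⟪f (x : ℕ), f i⟫‖ ^ 2 := by
        intro x
        have := (key i hi (x : ℕ) (hT x.2).1 (hT x.2).2).1
        rwa [norm_inner_symm] at this
      calc (T.card : ℝ) * A = ∑ _x : T, A := by
            rw [Finset.sum_const, Finset.card_univ, Fintype.card_coe, nsmul_eq_mul]
        _ ≤ _ := Finset.sum_le_sum (fun x _ => this x)
    have hfin : (T.card : ℝ) * A ≤ B := le_trans hlow (hbessel.trans (hnormB i))
    have : (T.card : ℝ) ≤ B / A := by
      rw [le_div_iff₀ hA]
      exact hfin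
    exact Nat.le_floor this
  have hfinite : S.Finite := by
    by_contra hinf
    obtain ⟨T, hTs, hTcard⟩ := Set.Infinite.exists_subset_card_eq hinf (⌊B / A⌋₊ + 1)
    have := hcard T hTs
    omega
  refine ⟨hfinite, ?_⟩
  have := hcard hfinite.toFinset (by simp)
  rwa [Set.ncard_eq_toFinset_card S hfinite]

end
end

section
/- Let (f_i)_{i=1}^∞ be a frame for a Hilbert space H with the subframe property, suppose a subfamily (g_i)_{i=1}^∞ of the frame is an orthonormal basis for H, and let (h_i)_{i∈Γ} be those remaining frame elements having finite support with respect to (g_i). Then there exist a natural number m and constants A, B > 0 such that for all i ∈ Γ and all j ≥ m with ⟨h_i, g_j⟩ ≠ 0, one has A ≤ |⟨h_i, g_j⟩| ≤ B. -/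
open scoped ComplexInnerProductSpace
open Submodule Filter

noncomputable section

variable {H : Type*} [NormedAddCommGroup H] [InnerProductSpace ℂ H] [CompleteSpace H]

private lemma aux_expand {g : ℕ → H} (hON : Orthonormal ℂ g)
    (htotal : (Submodule.span ℂ (Set.range g)).topologicalClosure = ⊤)
    (x : H) (T : Finset ℕ) (hT : ∀ n, ⟪x, g n⟫ ≠ 0 → n ∈ T) :
    x = ∑ n ∈ T, ⟪g n, x⟫ • g n := by
  have hy : ∀ n, ⟪g n, x - ∑ n' ∈ T, ⟪g n', x⟫ • g n'⟫ = 0 := by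
    intro n
    rw [inner_sub_right, inner_sum]
    simp_rw [inner_smul_right]
    by_cases hn : n ∈ T
    · rw [Finset.sum_eq_single n]
      · have h1 : ⟪g n, g n⟫ = (1 : ℂ) := by
          rw [inner_self_eq_norm_sq_to_K, hON.1 n]; norm_num
        rw [h1, mul_one, sub_self]
      · intro b _ hb
        rw [hON.2 (Ne.symm hb), mul_zero]
      · intro h; exact absurd hn h
    · have h0 : ⟪g n, x⟫ = 0 := by
        by_contra h
        exact hn (hT n (fun hc => h (by rw [← inner_conj_symm, hc, map_zero])))
      rw [h0, Finset.sum_eq_zero, sub_zero]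
      intro b hb
      rw [hON.2 (fun hnb => hn (by rw [hnb]; exact hb))]
      exact mul_zero _
  have hyo : x - ∑ n' ∈ T, ⟪g n', x⟫ • g n' ∈ (Submodule.span ℂ (Set.range g))ᗮ := by
    rw [Submodule.mem_orthogonal]
    intro u hu
    induction hu using Submodule.span_induction with
    | mem z hz => obtain ⟨n, rfl⟩ := hz; exact hy n
    | zero => simp
    | add u v _ _ hu hv => rw [inner_add_left, hu, hv, add_zero]
    | smul a u _ hu => rw [inner_smul_left, hu, mul_zero]
  have hbot : (Submodule.span ℂ (Set.range g))ᗮ = ⊥ := by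
    rw [← Submodule.triorthogonal_eq_orthogonal,
      Submodule.orthogonal_orthogonal_eq_closure (K := Submodule.span ℂ (Set.range g)),
      htotal, Submodule.top_orthogonal_eq_bot]
  rw [hbot, Submodule.mem_bot, sub_eq_zero] at hyo
  exact hyo


set_option maxHeartbeats 400000 in
private lemma aux_main (f : ℕ → H) (A B : ℝ) (hB : 0 < B)
    (hf : IsFrameFor f (⊤ : Submodule ℂ H) A B)
    (hsub : HasSubframeProperty f)
    (Δg : Set ℕ) (e : ℕ ≃ Δg)
    (hON : Orthonormal ℂ (fun n => f (e n)))
    (htotal : closedSpan (Set.range fun n => f (e n)) = ⊤) :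
    ∃ (m : ℕ) (A' : ℝ), 0 < A' ∧
      ∀ i : ℕ, i ∉ Δg → {n : ℕ | ⟪f i, f (e n)⟫ ≠ 0}.Finite →
        ∀ n ≥ m, ⟪f i, f (e n)⟫ ≠ 0 → A' ≤ ‖⟪f i, f (e n)⟫‖ := by
  classical
  by_contra hcon
  push_neg at hcon
  -- hcon : ∀ m A', 0 < A' → ∃ i ∉ Δg, Finite ∧ ∃ n ≥ m, c ≠ 0 ∧ ‖c‖ < A'
  set S : ℕ → Set ℕ := fun i => {n : ℕ | ⟪f i, f (e n)⟫ ≠ 0} with hS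
  set bnd : ℕ → ℕ := fun i => sSup (S i) with hbnd
  have hbnd_le : ∀ i, (S i).Finite → ∀ n ∈ S i, n ≤ bnd i :=
    fun i hfin n hn => le_csSup hfin.bddAbove hn
  -- selection function
  have hsel : ∀ m k : ℕ, ∃ p : ℕ × ℕ,
      (S p.1).Finite ∧ m ≤ p.2 ∧ ⟪f p.1, f (e p.2)⟫ ≠ 0 ∧
      ‖⟪f p.1, f (e p.2)⟫‖ < (1/2 : ℝ)^k := by
    intro m k
    obtain ⟨i, _, hfin, n, hn, hne, hlt⟩ := hcon m ((1/2 : ℝ)^k) (by positivity)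
    exact ⟨(i, n), hfin, hn, hne, hlt⟩
  choose P hP1 hP2 hP3 hP4 using hsel
  -- stage 1 recursion, carrying the running support bound
  set τ : ℕ → (ℕ × ℕ) × ℕ := fun k =>
    Nat.rec ((P 0 0, bnd (P 0 0).1))
      (fun k ih => (P (ih.2 + 1) (k+1), max ih.2 (bnd (P (ih.2 + 1) (k+1)).1))) k with hτ
  set I1 : ℕ → ℕ := fun k => (τ k).1.1 with hI1
  set N1 : ℕ → ℕ := fun k => (τ k).1.2 with hN1
  have hτ0 : τ 0 = (P 0 0, bnd (P 0 0).1) := rfl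
  have hτs : ∀ k, τ (k+1) = (P ((τ k).2 + 1) (k+1),
      max (τ k).2 (bnd (P ((τ k).2 + 1) (k+1)).1)) := fun k => rfl
  -- basic properties of stage 1
  have hkey : ∀ k, (S (I1 k)).Finite ∧ ⟪f (I1 k), f (e (N1 k))⟫ ≠ 0 ∧
      ‖⟪f (I1 k), f (e (N1 k))⟫‖ < (1/2:ℝ)^k ∧ bnd (I1 k) ≤ (τ k).2 ∧
      (∀ j, k = j + 1 → (τ j).2 < N1 k) := by
    intro k
    cases k with
    | zero => exact ⟨hP1 0 0, hP3 0 0, hP4 0 0, le_refl _, fun j h => by omega⟩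
    | succ k =>
      refine ⟨hP1 _ _, hP3 _ _, hP4 _ _, le_max_right _ _, fun j h => ?_⟩
      have hj : j = k := by omega
      subst hj
      have h1 := hP2 ((τ j).2 + 1) (j+1)
      have h2 : N1 (j+1) = (P ((τ j).2 + 1) (j+1)).2 := congrArg (fun p => p.1.2) (hτs j)
      omega
  have hτmono : Monotone fun k => (τ k).2 := by
    apply monotone_nat_of_le_succ
    intro k
    rw [hτs k]
    exact le_max_left _ _
  have hN1gt : ∀ j k, j ≤ k → (τ j).2 < N1 (k+1) := by
    intro j k hjk
    exact lt_of_le_of_lt (hτmono hjk) ((hkey (k+1)).2.2.2.2 k rfl)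
  -- I2 : vanishing of later columns on earlier rows
  have hI2 : ∀ j k, j < k → ⟪f (I1 j), f (e (N1 k))⟫ = 0 := by
    intro j k hjk
    by_contra hne
    have hmem : N1 k ∈ S (I1 j) := hne
    have h1 : N1 k ≤ bnd (I1 j) := hbnd_le _ (hkey j).1 _ hmem
    have h2 : bnd (I1 j) ≤ (τ j).2 := (hkey j).2.2.2.1
    obtain ⟨k', rfl⟩ : ∃ k', k = k' + 1 := ⟨k - 1, by omega⟩
    have h3 : (τ j).2 < N1 (k' + 1) := hN1gt j k' (by omega)
    omega
  have hN1mono : StrictMono N1 := by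
    apply strictMono_nat_of_lt_succ
    intro k
    have h1 : N1 k ≤ bnd (I1 k) := hbnd_le _ (hkey k).1 _ (hkey k).2.1
    have h2 : bnd (I1 k) ≤ (τ k).2 := (hkey k).2.2.2.1
    have h3 : (τ k).2 < N1 (k+1) := hN1gt k k le_rfl
    omega
  have hI1inj : Function.Injective I1 := by
    intro j k hjk
    by_contra hne
    rcases lt_trichotomy j k with h | h | h
    · exact (hkey k).2.1 (hjk ▸ hI2 j k h)
    · exact hne h
    · exact (hkey j).2.1 (hjk ▸ hI2 k j h)
  -- columns tend to zero
  have hcol : ∀ n, Tendsto (fun k => ‖⟪f (I1 k), f (e n)⟫‖) atTop (nhds 0) := by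
    intro n
    have hsummable : Summable (fun i => ‖⟪f (e n), f i⟫‖ ^ 2) := (hf.2 (f (e n)) trivial).1
    have h2 : Summable (fun k => ‖⟪f (e n), f (I1 k)⟫‖ ^ 2) := hsummable.comp_injective hI1inj
    have h3 := h2.tendsto_atTop_zero
    have h4 : Tendsto (fun k => ‖⟪f (I1 k), f (e n)⟫‖ ^ 2) atTop (nhds 0) := by
      convert h3 using 2 with k
      exact congrArg (· ^ 2) (norm_inner_symm _ _)
    have h5 := (Real.continuous_sqrt.tendsto 0).comp h4
    simpa [Function.comp_def, Real.sqrt_sq, norm_nonneg] using h5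
  -- stage 2 recursion
  have hstep : ∀ K m : ℕ, ∃ k, K < k ∧ ∀ j ≤ K, ‖⟪f (I1 k), f (e (N1 j))⟫‖ < (1/2:ℝ)^m := by
    intro K m
    have hev : ∀ᶠ k in atTop,
        K < k ∧ ∀ j ∈ Finset.range (K+1), ‖⟪f (I1 k), f (e (N1 j))⟫‖ < (1/2:ℝ)^m := by
      refine (eventually_gt_atTop K).and ?_
      rw [eventually_all_finset]
      intro j _
      exact (hcol (N1 j)).eventually (gt_mem_nhds (by positivity))
    obtain ⟨k, hk1, hk2⟩ := hev.exists
    exact ⟨k, hk1, fun j hj => hk2 j (Finset.mem_range.2 (by omega))⟩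
  choose step hstep1 hstep2 using hstep
  set κ : ℕ → ℕ := fun m => Nat.rec 0 (fun m ih => step ih (m+1)) m with hκ
  have hκs : ∀ m, κ (m+1) = step (κ m) (m+1) := fun m => rfl
  have hκmono : StrictMono κ := by
    apply strictMono_nat_of_lt_succ
    intro m
    rw [hκs m]
    exact hstep1 (κ m) (m+1)
  have hoff : ∀ l m, l ≤ m → ‖⟪f (I1 (κ (m+1))), f (e (N1 (κ l)))⟫‖ < (1/2:ℝ)^(m+1) := by
    intro l m hlm
    rw [hκs m]
    exact hstep2 (κ m) (m+1) (κ l) (hκmono.monotone hlm)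
  -- the bad subfamily
  set ν : ℕ → ℕ := fun m => N1 (κ m) with hν
  set If : ℕ → ℕ := fun m => I1 (κ m) with hIf
  set Δ : Set ℕ := Set.range If ∪ (fun n => ((e n : ℕ))) '' {n | ∀ m, n ≠ ν m} with hΔ
  clear_value Δ
  have hmemΔ1 : ∀ m, If m ∈ Δ := fun m => by rw [hΔ]; exact Or.inl ⟨m, rfl⟩
  have hmemΔ2 : ∀ n, (∀ m, n ≠ ν m) → ((e n : ℕ)) ∈ Δ := fun n hn => by
    rw [hΔ]; exact Or.inr ⟨n, hn, rfl⟩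
  have hΔcases : ∀ δ : ℕ, δ ∈ Δ → (∃ m, If m = δ) ∨ ∃ n, (∀ m, n ≠ ν m) ∧ ((e n : ℕ)) = δ := by
    intro δ hδ
    rw [hΔ] at hδ
    rcases hδ with ⟨m, hm⟩ | ⟨n, hn1, hn2⟩
    · exact Or.inl ⟨m, hm⟩
    · exact Or.inr ⟨n, hn1, hn2⟩
  obtain ⟨AΔ, BΔ, hAΔ, hBΔ, hFS⟩ := hsub Δ
  set Ksp := closedSpan (Set.range fun δ : Δ => f δ) with hKsp
  have hmemKsp : ∀ δ, δ ∈ Δ → f δ ∈ Ksp := by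
    intro δ hδ
    exact Submodule.le_topologicalClosure _ (Submodule.subset_span ⟨⟨δ, hδ⟩, rfl⟩)
  -- membership of the g (ν m)
  have hmemg : ∀ m, f (e (ν m)) ∈ Ksp := by
    intro m
    induction m using Nat.strong_induction_on with
    | _ m IH =>
      have hfin : (S (If m)).Finite := (hkey (κ m)).1
      have hTspec : ∀ n, ⟪f (If m), f (e n)⟫ ≠ 0 → n ∈ hfin.toFinset := by
        intro n hn
        rw [Set.Finite.mem_toFinset]
        exact hn
      set T : Finset ℕ := hfin.toFinset with hT
      have hexp : f (If m) = ∑ n ∈ T, ⟪f (e n), f (If m)⟫ • f (e n) :=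
        aux_expand hON htotal _ T hTspec
      have hνT : ν m ∈ T := hTspec _ (hkey (κ m)).2.1
      have hcne : ⟪f (e (ν m)), f (If m)⟫ ≠ 0 :=
        fun h => (hkey (κ m)).2.1 (inner_eq_zero_symm.mp h)
      have hothers : ∑ n ∈ T.erase (ν m), ⟪f (e n), f (If m)⟫ • f (e n) ∈ Ksp := by
        apply Submodule.sum_mem
        intro n hn
        have hnT : n ∈ T := Finset.mem_of_mem_erase hn
        have hnne : n ≠ ν m := Finset.ne_of_mem_erase hn
        by_cases hc : ∀ m', n ≠ ν m'
        · exact Submodule.smul_mem _ _ (hmemKsp _ (hmemΔ2 n hc))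
        · push_neg at hc
          obtain ⟨m', rfl⟩ := hc
          rcases lt_trichotomy m' m with h | h | h
          · exact Submodule.smul_mem _ _ (IH m' h)
          · exact absurd (congrArg ν h) hnne
          · exfalso
            have h0 : ⟪f (If m), f (e (ν m'))⟫ = 0 := hI2 (κ m) (κ m') (hκmono h)
            rw [hT, Set.Finite.mem_toFinset] at hnT
            exact hnT h0
      have hsum : f (If m) ∈ Ksp := hmemKsp _ (hmemΔ1 m)
      have h2 := Finset.add_sum_erase T (fun n => (⟪f (e n), f (If m)⟫ : ℂ) • f (e n)) hνT
      have h1 := eq_sub_of_add_eq h2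
      beta_reduce at h1
      rw [← hexp] at h1
      have hx : (⟪f (e (ν m)), f (If m)⟫ : ℂ) • f (e (ν m)) ∈ Ksp := by
        rw [h1]
        exact Submodule.sub_mem _ hsum hothers
      have h3 := Submodule.smul_mem Ksp (⟪f (e (ν m)), f (If m)⟫)⁻¹ hx
      rwa [smul_smul, inv_mul_cancel₀ hcne, one_smul] at h3
  -- the estimate
  have hest : ∀ m : ℕ, AΔ ≤ 2 * (1/4:ℝ)^m := by
    intro m
    obtain ⟨hsumΔ, hlow, -⟩ := hFS.2 (f (e (ν m))) (hmemg m)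
    have hnorm1 : ‖f (e (ν m))‖ = 1 := hON.1 (ν m)
    rw [hnorm1, one_pow, mul_one] at hlow
    set φ : ℕ → Δ := fun m' => ⟨If m', hmemΔ1 m'⟩ with hφ
    have hφinj : Function.Injective φ := by
      intro a b hab
      have hab' : If a = If b := congrArg Subtype.val hab
      exact hκmono.injective (hI1inj hab')
    set F : ℕ → ℝ := fun m' => ‖⟪f (e (ν m)), f (If m')⟫‖ ^ 2 with hF
    have hFsupp : Function.support
        (fun δ : Δ => ‖⟪f (e (ν m)), f ((δ : ℕ))⟫‖ ^ 2) ⊆ Set.range φ := by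
      intro δ hδ
      rcases hΔcases (δ : ℕ) δ.2 with ⟨m', hm'⟩ | ⟨n, hn1, hn2⟩
      · exact ⟨m', Subtype.ext hm'⟩
      · exfalso
        apply hδ
        have h0 : ⟪f (e (ν m)), f (e n)⟫ = 0 := hON.2 (fun h => hn1 m h.symm)
        dsimp only
        rw [← hn2]
        simp [h0]
    have htsum_eq : ∑' m', F m' = ∑' δ : Δ, ‖⟪f (e (ν m)), f ((δ : ℕ))⟫‖ ^ 2 :=
      hφinj.tsum_eq (f := fun δ : Δ => ‖⟪f (e (ν m)), f ((δ : ℕ))⟫‖ ^ 2) hFsupp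
    have hFsummable : Summable F := by
      have h := hsumΔ.comp_injective hφinj
      exact h
    have hF0 : ∀ m' ∈ Finset.range m, F m' = 0 := by
      intro m' hm'
      have h := hI2 (κ m') (κ m) (hκmono (Finset.mem_range.1 hm'))
      have h' : ⟪f (e (ν m)), f (If m')⟫ = 0 := inner_eq_zero_symm.mp h
      simp [hF, h']
    have hFle : ∀ j : ℕ, F (j + m) ≤ (1/4:ℝ)^(j+m) := by
      intro j
      have hb : ‖⟪f (If (j+m)), f (e (ν m))⟫‖ < (1/2:ℝ)^(j+m) := by
        cases j with
        | zero =>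
          have h1 := (hkey (κ m)).2.2.1
          have h2 : (1/2:ℝ)^(κ m) ≤ (1/2:ℝ)^m :=
            pow_le_pow_of_le_one (by norm_num) (by norm_num) hκmono.le_apply
          simpa using lt_of_lt_of_le h1 h2
        | succ j' =>
          have h3 := hoff m (j' + m) (by omega)
          have hidx : j' + 1 + m = (j' + m) + 1 := by omega
          rw [hidx]
          exact h3
      have hq : F (j + m) ≤ ((1/2:ℝ)^(j+m))^2 := by
        rw [hF]
        dsimp only
        rw [norm_inner_symm]
        exact pow_le_pow_left₀ (norm_nonneg _) hb.le 2
      refine hq.trans_eq ?_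
      rw [← pow_mul, mul_comm, pow_mul]
      norm_num
    have hgeo : Summable (fun j : ℕ => (1/4:ℝ)^(j+m)) := by
      simp_rw [pow_add]
      exact (summable_geometric_of_lt_one (by norm_num) (by norm_num)).mul_right _
    have hsplit := Summable.sum_add_tsum_nat_add m hFsummable
    have hval : ∑' j : ℕ, (1/4:ℝ)^(j+m) = (1-(1/4:ℝ))⁻¹ * (1/4)^m := by
      simp_rw [pow_add]
      rw [tsum_mul_right, tsum_geometric_of_lt_one (by norm_num) (by norm_num)]
    calc AΔ ≤ ∑' m', F m' := by rw [htsum_eq]; exact hlow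
      _ = ∑ m' ∈ Finset.range m, F m' + ∑' j, F (j + m) := hsplit.symm
      _ = ∑' j, F (j + m) := by rw [Finset.sum_eq_zero hF0, zero_add]
      _ ≤ ∑' j : ℕ, (1/4:ℝ)^(j+m) :=
        Summable.tsum_le_tsum hFle ((summable_nat_add_iff m).2 hFsummable) hgeo
      _ ≤ 2 * (1/4:ℝ)^m := by
        rw [hval]
        have h4 : (0:ℝ) < (1/4:ℝ)^m := by positivity
        norm_num
  -- conclusion
  have h0 : AΔ ≤ 0 := by
    have ht : Tendsto (fun m : ℕ => 2 * (1/4:ℝ)^m) atTop (nhds 0) := by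
      have := tendsto_pow_atTop_nhds_zero_of_lt_one (by norm_num : (0:ℝ) ≤ 1/4) (by norm_num)
      simpa using this.const_mul 2
    exact ge_of_tendsto' ht hest
  linarith
/-- **Theorem 3.2, Step II.** Let `f` be a frame with the subframe property whose subfamily
`(g n) = (f (e n))` is an orthonormal basis of `H`, and consider the remaining frame elements
of finite support with respect to `(g n)`.  Then there are `m ∈ ℕ` and `A', B' > 0` such that
all their nonzero coordinates past `m` satisfy `A' ≤ |⟨h i, g n⟩| ≤ B'`. -/
theorem finite_support_coordinates_eventually_bounded
    (f : ℕ → H) (A B : ℝ) (hA : 0 < A) (hB : 0 < B)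
    (hf : IsFrameFor f (⊤ : Submodule ℂ H) A B)
    (hsub : HasSubframeProperty f)
    (Δg : Set ℕ) (e : ℕ ≃ Δg)
    (hON : Orthonormal ℂ (fun n => f (e n)))
    (htotal : closedSpan (Set.range fun n => f (e n)) = ⊤) :
    ∃ (m : ℕ) (A' B' : ℝ), 0 < A' ∧ 0 < B' ∧
      ∀ i : ℕ, i ∉ Δg → {n : ℕ | ⟪f i, f (e n)⟫ ≠ 0}.Finite →
        ∀ n ≥ m, ⟪f i, f (e n)⟫ ≠ 0 →
          A' ≤ ‖⟪f i, f (e n)⟫‖ ∧ ‖⟪f i, f (e n)⟫‖ ≤ B' := by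
  have hupper : ∀ i n, ‖⟪f i, f (e n)⟫‖ ≤ Real.sqrt B := by
    intro i n
    obtain ⟨hs, -, hub⟩ := hf.2 (f (e n)) trivial
    have h1 : ‖⟪f (e n), f i⟫‖ ^ 2 ≤ ∑' j, ‖⟪f (e n), f j⟫‖ ^ 2 :=
      Summable.le_tsum hs i (fun j _ => sq_nonneg _)
    have h2 : ∑' j, ‖⟪f (e n), f j⟫‖ ^ 2 ≤ B := by
      have hn1 : ‖f (e n)‖ = 1 := hON.1 n
      rwa [hn1, one_pow, mul_one] at hub
    have h3 : ‖⟪f i, f (e n)⟫‖ ^ 2 ≤ B := by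
      rw [norm_inner_symm]; exact h1.trans h2
    have h4 := Real.sqrt_le_sqrt h3
    rwa [Real.sqrt_sq (norm_nonneg _)] at h4
  obtain ⟨m, A', hA', hlow⟩ := aux_main f A B hB hf hsub Δg e hON htotal
  exact ⟨m, A', Real.sqrt B, hA', Real.sqrt_pos.2 hB,
    fun i hi hfin n hn hne => ⟨hlow i hi hfin n hn hne, hupper i n⟩⟩

end
end

section
/- Let (f_i)_{i=1}^∞ be a frame for a Hilbert space H with the subframe property which can be partitioned into a Riesz basis (g_i)_{i=1}^∞ of H, a family (h_i)_{i∈Γ} of vectors each having finite support with respect to (g_i), and a nonempty finite family (k_i)_{i=1}^ℓ (ℓ ≥ 1) of vectors each having infinite support with respect to (g_i). Then no permutation of (f_i)_{i=1}^∞ satisfies the projection method. -/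
open scoped ComplexInnerProductSpace
open Submodule Filter

noncomputable section

variable {H : Type*} [NormedAddCommGroup H] [InnerProductSpace ℂ H] [CompleteSpace H]

/-- **Theorem 4.1, (2) ⇒ (1) (contrapositive).** Let `f` be a frame for `H` with the subframe
property, partitioned into a Riesz basis `(g n) = (f (e n))` (indexed by `Δg`), vectors of finite
support w.r.t. the basis (indexed by `Γ`, i.e. lying in the algebraic span of the basis vectors),
and a nonempty finite family (indexed by `Λ`) of vectors of infinite support.  Then no permutation
of `f` satisfies the projection method.  Here, for the permuted frame `F = f ∘ σ`,
`u i = S⁻¹ (F i)` is characterized by `∑ⱼ ⟪F j, u i⟫ • F j = F i`, and `w n i = Sₙ⁻¹ (F i)`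
(for `i < n`) is characterized by membership in `span (F 0, …, F (n-1))` together with
`∑_{j < n} ⟪F j, w n i⟫ • F j = F i`; the projection method asserts
`⟪w n i, x⟫ → ⟪u i, x⟫` for all `x` and `i`. -/
theorem projection_method_fails_of_infinite_support
    (f : ℕ → H) (A B : ℝ) (hA : 0 < A) (hB : 0 < B)
    (hf : IsFrameFor f (⊤ : Submodule ℂ H) A B)
    (hsub : HasSubframeProperty f)
    (Δg Γ Λ : Set ℕ)
    (hpart : Δg ∪ Γ ∪ Λ = Set.univ) (hdgG : Disjoint Δg Γ) (hdgL : Disjoint Δg Λ)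
    (hGL : Disjoint Γ Λ)
    (e : ℕ ≃ Δg)
    (hRB : IsRieszBasis (fun n => f (e n)))
    (hΓ : ∀ i ∈ Γ, f i ∈ Submodule.span ℂ (Set.range fun n => f (e n)))
    (hΛfin : Λ.Finite) (hΛne : Λ.Nonempty)
    (hΛ : ∀ i ∈ Λ, f i ∉ Submodule.span ℂ (Set.range fun n => f (e n))) :
    ∀ σ : Equiv.Perm ℕ,
      ∀ u : ℕ → H,
        (∀ i, HasSum (fun j => ⟪f (σ j), u i⟫ • f (σ j)) (f (σ i))) →
      ∀ w : ℕ → ℕ → H,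
        (∀ n, ∀ i < n,
          w n i ∈ Submodule.span ℂ ((fun j => f (σ j)) '' Set.Iio n) ∧
          ∑ j ∈ Finset.range n, ⟪f (σ j), w n i⟫ • f (σ j) = f (σ i)) →
      ¬ (∀ (x : H) (i : ℕ),
          Filter.Tendsto (fun n => ⟪w n i, x⟫) Filter.atTop (nhds ⟪u i, x⟫)) := by
  intro σ u hu w hw hP
  classical
  haveI : Fintype ↥Λ := hΛfin.fintype
  set M : Submodule ℂ H := Submodule.span ℂ (Set.range fun n => f (e n)) with hMdef
  -- every index outside Λ gives a vector in M
  have hMem : ∀ i, i ∉ Λ → f i ∈ M := by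
    intro i hi
    have hiu : i ∈ Δg ∪ Γ ∪ Λ := by rw [hpart]; exact Set.mem_univ i
    rcases hiu with (hig | hiG) | hiL
    · obtain ⟨n, hn⟩ := e.surjective ⟨i, hig⟩
      have hfi : f i = f (e n) := by rw [hn]
      rw [hfi]
      exact Submodule.subset_span ⟨n, rfl⟩
    · exact hΓ i hiG
    · exact absurd hiL hi
  -- coefficient-to-vector linear maps
  let T : (↥Λ → ℂ) →ₗ[ℂ] H :=
    { toFun := fun a => ∑ l : ↥Λ, a l • f ↑l
      map_add' := by intro a b; simp [add_smul, Finset.sum_add_distrib]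
      map_smul' := by intro c a; simp [smul_smul, Finset.smul_sum] }
  let Y : (↥Λ → ℂ) →ₗ[ℂ] H :=
    { toFun := fun a => ∑ l : ↥Λ, a l • u (σ.symm ↑l)
      map_add' := by intro a b; simp [add_smul, Finset.sum_add_distrib]
      map_smul' := by intro c a; simp [smul_smul, Finset.smul_sum] }
  have hT : ∀ a : ↥Λ → ℂ, T a = ∑ l : ↥Λ, a l • f ↑l := fun _ => rfl
  have hY : ∀ a : ↥Λ → ℂ, Y a = ∑ l : ↥Λ, a l • u (σ.symm ↑l) := fun _ => rfl
  let E : (↥Λ → ℂ) →ₗ[ℂ] (↥Λ → ℂ) :=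
    (LinearMap.id : (↥Λ → ℂ) →ₗ[ℂ] (↥Λ → ℂ)) -
      LinearMap.pi (fun l : ↥Λ => ((innerSL ℂ (f ↑l)).toLinearMap).comp Y)
  have hE : ∀ (a : ↥Λ → ℂ) (l : ↥Λ), E a l = a l - ⟪f ↑l, Y a⟫ := fun a l => rfl
  have hYsingle : ∀ l0 : ↥Λ, Y (Pi.single l0 1) = u (σ.symm ↑l0) := by
    intro l0
    rw [hY]
    simp [Pi.single_apply, ite_smul]
  have hTsingle : ∀ l0 : ↥Λ, T (Pi.single l0 1) = f ↑l0 := by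
    intro l0
    rw [hT]
    simp [Pi.single_apply, ite_smul]
  -- Key limit lemma: for each l0 ∈ Λ, f l0 - ∑ ⟪f l, u (σ⁻¹ l0)⟫ • f l ∈ M
  have hLim : ∀ l0 : ↥Λ, (f ↑l0 - ∑ l : ↥Λ, ⟪f ↑l, u (σ.symm ↑l0)⟫ • f ↑l) ∈ M := by
    intro l0
    set ik := σ.symm ↑l0 with hik
    let L : (ℂ × (↥Λ → ℂ)) →ₗ[ℂ] H :=
      { toFun := fun p => p.1 • f ↑l0 - T p.2
        map_add' := by intro p q; simp [add_smul]; abel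
        map_smul' := by intro c p; simp [smul_sub, smul_smul] }
    have hL : ∀ p : ℂ × (↥Λ → ℂ), L p = p.1 • f ↑l0 - T p.2 := fun _ => rfl
    have hclosed : IsClosed ((Submodule.comap L M : Submodule ℂ (ℂ × (↥Λ → ℂ))) : Set (ℂ × (↥Λ → ℂ))) :=
      Submodule.closed_of_finiteDimensional _
    obtain ⟨N0, hN0⟩ : ∃ N0 : ℕ, ∀ m ∈ Λ, σ.symm m < N0 := by
      obtain ⟨N0, hN0⟩ := (hΛfin.image σ.symm).bddAbove
      exact ⟨N0 + 1, fun m hm => Nat.lt_succ_of_le (hN0 ⟨m, hm, rfl⟩)⟩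
    have hmem : ∀ n, N0 ≤ n →
        (((1:ℂ), fun l : ↥Λ => ⟪f ↑l, w n ik⟫) : ℂ × (↥Λ → ℂ)) ∈ Submodule.comap L M := by
      intro n hn
      have hikn : ik < n := lt_of_lt_of_le (hN0 ↑l0 l0.2) hn
      obtain ⟨-, hsum⟩ := hw n ik hikn
      rw [hik, Equiv.apply_symm_apply] at hsum
      have hsplit := Finset.sum_filter_add_sum_filter_not (Finset.range n) (fun j => σ j ∈ Λ)
        (fun j => ⟪f (σ j), w n ik⟫ • f (σ j))
      have h1 : ∑ j ∈ (Finset.range n).filter (fun j => σ j ∈ Λ), ⟪f (σ j), w n ik⟫ • f (σ j)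
          = ∑ l : ↥Λ, ⟪f ↑l, w n ik⟫ • f ↑l := by
        rw [← Finset.sum_subtype hΛfin.toFinset (fun x => hΛfin.mem_toFinset)
          (fun m => ⟪f m, w n ik⟫ • f m)]
        refine Finset.sum_nbij' (fun j => σ j) (fun m => σ.symm m) ?_ ?_ ?_ ?_ ?_
        · intro j hj
          rw [hΛfin.mem_toFinset]
          exact (Finset.mem_filter.mp hj).2
        · intro m hm
          rw [hΛfin.mem_toFinset] at hm
          refine Finset.mem_filter.mpr ⟨Finset.mem_range.mpr (lt_of_lt_of_le (hN0 m hm) hn), ?_⟩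
          simpa using hm
        · intro j _; simp
        · intro m _; simp
        · intro j _; rfl
      have hrest : ∑ j ∈ (Finset.range n).filter (fun j => ¬ σ j ∈ Λ),
          ⟪f (σ j), w n ik⟫ • f (σ j) ∈ M := by
        refine Submodule.sum_mem _ ?_
        intro j hj
        exact Submodule.smul_mem _ _ (hMem (σ j) (Finset.mem_filter.mp hj).2)
      refine Submodule.mem_comap.mpr ?_
      rw [hL]
      have key : (1:ℂ) • f ↑l0 - T (fun l : ↥Λ => ⟪f ↑l, w n ik⟫)
          = ∑ j ∈ (Finset.range n).filter (fun j => ¬ σ j ∈ Λ), ⟪f (σ j), w n ik⟫ • f (σ j) := by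
        rw [one_smul, hT, ← h1, ← hsum, ← hsplit]
        abel
      rw [key]
      exact hrest
    have htend : Filter.Tendsto (fun n => (((1:ℂ), fun l : ↥Λ => ⟪f ↑l, w n ik⟫) : ℂ × (↥Λ → ℂ)))
        Filter.atTop (nhds (((1:ℂ), fun l : ↥Λ => ⟪f ↑l, u ik⟫) : ℂ × (↥Λ → ℂ))) := by
      have hsec : Filter.Tendsto (fun n => (fun l : ↥Λ => ⟪f ↑l, w n ik⟫))
          Filter.atTop (nhds (fun l : ↥Λ => ⟪f ↑l, u ik⟫)) := by
        refine tendsto_pi_nhds.mpr fun l => ?_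
        have h2 := (Complex.continuous_conj.tendsto _).comp (hP (f ↑l) ik)
        simpa [Function.comp_def, inner_conj_symm] using h2
      exact Filter.Tendsto.prodMk_nhds
        (tendsto_const_nhds : Filter.Tendsto (fun _ : ℕ => (1:ℂ)) Filter.atTop (nhds 1)) hsec
    have hlimmem : (((1:ℂ), fun l : ↥Λ => ⟪f ↑l, u ik⟫) : ℂ × (↥Λ → ℂ)) ∈ Submodule.comap L M :=
      hclosed.mem_of_tendsto htend (Filter.eventually_atTop.mpr ⟨N0, hmem⟩)
    have := Submodule.mem_comap.mp hlimmem
    rw [hL, one_smul, hT] at this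
    exact this
  -- E is injective
  have hinj : Function.Injective E := by
    rw [injective_iff_map_eq_zero]
    intro a ha
    set y : H := Y a with hy
    have hay : ∀ l : ↥Λ, a l = ⟪f ↑l, y⟫ := by
      intro l
      have := congrFun ha l
      rw [hE] at this
      have := sub_eq_zero.mp this
      simpa [hy] using this
    -- HasSum over the permuted index
    have h1 : HasSum (fun j => ⟪f (σ j), y⟫ • f (σ j)) (T a) := by
      have h0 : HasSum (fun j => ∑ l : ↥Λ, a l • (⟪f (σ j), u (σ.symm ↑l)⟫ • f (σ j)))
          (∑ l : ↥Λ, a l • f (σ (σ.symm ↑l))) :=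
        hasSum_sum fun l _ => ((hu (σ.symm ↑l)).const_smul (a l))
      simp only [Equiv.apply_symm_apply] at h0
      rw [hT]
      convert h0 using 2 with j
      rw [hy, hY, inner_sum]
      simp only [inner_smul_right]
      rw [Finset.sum_smul]
      congr 1 with l
      rw [smul_smul]
    have h2 : HasSum (fun i => ⟪f i, y⟫ • f i) (T a) := (Equiv.hasSum_iff σ).mp h1
    have hfin : HasSum (fun i => if i ∈ Λ then ⟪f i, y⟫ • f i else 0) (T a) := by
      have h3 : HasSum (fun i => if i ∈ Λ then ⟪f i, y⟫ • f i else 0)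
          (∑ i ∈ hΛfin.toFinset, if i ∈ Λ then ⟪f i, y⟫ • f i else 0) := by
        refine hasSum_sum_of_ne_finset_zero ?_
        intro b hb
        rw [hΛfin.mem_toFinset] at hb
        simp [hb]
      have h4 : ∑ i ∈ hΛfin.toFinset, (if i ∈ Λ then ⟪f i, y⟫ • f i else 0) = T a := by
        rw [Finset.sum_congr rfl (fun i hi => if_pos (hΛfin.mem_toFinset.mp hi))]
        rw [Finset.sum_subtype hΛfin.toFinset (fun x => hΛfin.mem_toFinset)
          (fun m => ⟪f m, y⟫ • f m), hT]
        exact Finset.sum_congr rfl fun l _ => by rw [← hay]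
      rwa [h4] at h3
    have h5 : HasSum (fun i => if i ∈ Λ then 0 else ⟪f i, y⟫ • f i) 0 := by
      have h6 := h2.sub hfin
      rw [sub_self] at h6
      convert h6 using 2 with i
      by_cases hi : i ∈ Λ <;> simp [hi]
    have h7 : HasSum (fun i => if i ∈ Λ then (0:ℂ) else ⟪f i, y⟫ * (starRingEnd ℂ) ⟪f i, y⟫) 0 := by
      have h8 := (innerSL ℂ y).hasSum h5
      rw [map_zero] at h8
      have hfe : (fun i => (innerSL ℂ y) (if i ∈ Λ then 0 else ⟪f i, y⟫ • f i))
          = fun i => if i ∈ Λ then (0:ℂ) else ⟪f i, y⟫ * (starRingEnd ℂ) ⟪f i, y⟫ := by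
        funext i
        by_cases hi : i ∈ Λ
        · simp [hi]
        · simp only [hi, if_false, innerSL_apply_apply, inner_smul_right]
          rw [← inner_conj_symm y (f i)]
      rwa [hfe] at h8
    have h9 : HasSum (fun i => if i ∈ Λ then (0:ℝ) else Complex.normSq ⟪f i, y⟫) 0 := by
      have h10 := Complex.reCLM.hasSum h7
      rw [map_zero] at h10
      have hfe : (fun i => Complex.reCLM (if i ∈ Λ then (0:ℂ) else ⟪f i, y⟫ * (starRingEnd ℂ) ⟪f i, y⟫))
          = fun i => if i ∈ Λ then (0:ℝ) else Complex.normSq ⟪f i, y⟫ := by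
        funext i
        by_cases hi : i ∈ Λ
        · simp [hi]
        · simp only [hi, if_false, Complex.mul_conj]
          simp
      rwa [hfe] at h10
    have hzero : ∀ i, i ∉ Λ → ⟪f i, y⟫ = 0 := by
      intro i hi
      have hle := le_hasSum h9 i (fun j _ => by
        by_cases hj : j ∈ Λ
        · simp [hj]
        · simp only [hj, if_false]
          exact Complex.normSq_nonneg _)
      rw [if_neg hi] at hle
      have hge := Complex.normSq_nonneg ⟪f i, y⟫
      have : Complex.normSq ⟪f i, y⟫ = 0 := le_antisymm hle hge
      exact Complex.normSq_eq_zero.mp this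
    have hy0 : y = 0 := by
      have hker : Submodule.span ℂ (Set.range fun n => f (e n)) ≤ (innerSL ℂ y).ker := by
        rw [Submodule.span_le]
        rintro x ⟨n, rfl⟩
        have hnotin : (↑(e n) : ℕ) ∉ Λ := fun h => Set.disjoint_left.mp hdgL (e n).2 h
        have h0 := hzero _ hnotin
        have : ⟪y, f ↑(e n)⟫ = 0 := by rw [← inner_conj_symm, h0, map_zero]
        simpa [LinearMap.mem_ker] using this
      have htop : (⊤ : Submodule ℂ H) ≤ (innerSL ℂ y).ker := by
        have hcl : closedSpan (Set.range fun n => f (e n)) ≤ (innerSL ℂ y).ker :=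
          Submodule.topologicalClosure_minimal _ hker (ContinuousLinearMap.isClosed_ker _)
        rwa [hRB.1] at hcl
      have hyy : ⟪y, y⟫ = 0 := by
        have := htop (Submodule.mem_top (x := y))
        simpa [LinearMap.mem_ker] using this
      exact inner_self_eq_zero.mp hyy
    funext l
    rw [hay l, hy0, inner_zero_right]
    rfl
  -- conclude: f k0 ∈ M, contradiction
  obtain ⟨k0, hk0⟩ := hΛne
  have hsurj : Function.Surjective E := LinearMap.injective_iff_surjective.mp hinj
  obtain ⟨a, ha⟩ := hsurj (Pi.single ⟨k0, hk0⟩ 1)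
  have hall : ∀ b : ↥Λ → ℂ, T (E b) ∈ M := by
    intro b
    have hsingle : ∀ l0 : ↥Λ, T (E (Pi.single l0 1)) ∈ M := by
      intro l0
      have heq : T (E (Pi.single l0 1)) = f ↑l0 - ∑ l : ↥Λ, ⟪f ↑l, u (σ.symm ↑l0)⟫ • f ↑l := by
        have : E (Pi.single l0 1) = fun l => (Pi.single l0 1 : ↥Λ → ℂ) l - ⟪f ↑l, u (σ.symm ↑l0)⟫ := by
          funext l
          rw [hE, hYsingle]
        rw [this, hT]
        simp only [sub_smul]
        rw [Finset.sum_sub_distrib]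
        congr 1
        simp [Pi.single_apply, ite_smul]
      rw [heq]
      exact hLim l0
    have hb : b = ∑ l : ↥Λ, b l • (Pi.single l 1 : ↥Λ → ℂ) := by
      funext j
      rw [Finset.sum_apply]
      simp [Pi.single_apply]
    rw [hb, map_sum, map_sum]
    exact Submodule.sum_mem _ fun l _ => by
      rw [map_smul, map_smul]
      exact Submodule.smul_mem _ _ (hsingle l)
  have hfk0 : f k0 ∈ M := by
    have h := hall a
    rw [ha, hTsingle] at h
    exact h
  exact hΛ k0 hk0 hfk0


end
end
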